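/- arXiv:2010.01623 — 4 statements merged into one kernel-verified Lean document; each statement's English description precedes it below -/
import Mathlib

section
/- Let n be a natural number and consider the subposet D of the product poset (Fin n → Fin 3) (pointwise order) consisting of those tuples x such that for every index i with i+1 < n, if x(i+1) = 0 then x(i) = 0. Then the number of maximal chains of D, multiplied by 2^n · n!, equals (2n)!. Equivalently, the number of maximal chains of D is the odd double factorial (2n-1)!! = (2n)!/(2^n n!). -/
open Finset Function

variable {n : ℕ}

abbrev DD (n : ℕ) := {x : Fin n → Fin 3 //
  ∀ (i : ℕ) (h : i + 1 < n), x ⟨i + 1, h⟩ = 0 → x ⟨i, Nat.lt_of_succ_lt h⟩ = 0}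

def rk (x : DD n) : ℕ := ∑ i, (x.1 i : ℕ)

lemma le_iff {x y : DD n} : x ≤ y ↔ ∀ i, (x.1 i : ℕ) ≤ (y.1 i : ℕ) := by
  rw [← Subtype.coe_le_coe, Pi.le_def]
  exact forall_congr' fun i => Fin.le_def

lemma nonzero_up (x : DD n) {i j : Fin n} (hij : i ≤ j) (hi : x.1 i ≠ 0) : x.1 j ≠ 0 := by
  have aux : ∀ (d a : ℕ) (ha : a < n) (had : a + d < n),
      x.1 ⟨a, ha⟩ ≠ 0 → x.1 ⟨a + d, had⟩ ≠ 0 := by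
    intro d
    induction d with
    | zero => intro a ha had h; exact h
    | succ d ih =>
      intro a ha had h hz
      have h1 : a + d < n := by omega
      have := x.2 (a + d) (by omega) hz
      exact ih a ha h1 h this
  have hd : (j : ℕ) = (i : ℕ) + ((j : ℕ) - (i : ℕ)) := by
    have := (Fin.le_def).mp hij; omega
  have := aux ((j : ℕ) - (i : ℕ)) i i.2 (by omega) (by simpa using hi)
  convert this using 2
  exact Fin.ext hd

lemma rk_lt_rk {x y : DD n} (hxy : x ≤ y) (hne : x ≠ y) : rk x < rk y := by
  have hle := le_iff.mp hxy
  have : ∃ i, x.1 i ≠ y.1 i := by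
    by_contra h
    push_neg at h
    exact hne (Subtype.ext (funext h))
  obtain ⟨i, hi⟩ := this
  exact Finset.sum_lt_sum (fun i _ => hle i)
    ⟨i, Finset.mem_univ i, lt_of_le_of_ne (hle i) (fun h => hi (Fin.ext h))⟩

lemma rk_le (x : DD n) : rk x ≤ 2 * n := by
  calc rk x ≤ ∑ _i : Fin n, 2 := Finset.sum_le_sum (fun i _ => by omega)
  _ = 2 * n := by simp [mul_comm]

lemma rk_mono {x y : DD n} (hxy : x ≤ y) : rk x ≤ rk y :=
  Finset.sum_le_sum (fun i _ => le_iff.mp hxy i)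

def botD : DD n := ⟨fun _ => 0, fun _ _ _ => rfl⟩
def topD : DD n := ⟨fun _ => 2, fun i h hz => by simp at hz⟩

lemma botD_le (x : DD n) : botD ≤ x := le_iff.mpr fun i => by simp [botD]
lemma le_topD (x : DD n) : x ≤ topD := le_iff.mpr fun i => by
  have := (x.1 i).2; simp [topD]; omega

lemma rk_botD : rk (botD : DD n) = 0 := by simp [rk, botD]
lemma rk_topD : rk (topD : DD n) = 2 * n := by simp [rk, topD, mul_comm]

lemma fin3_ne_zero_iff {a : Fin 3} : a ≠ 0 ↔ 1 ≤ (a : ℕ) := by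
  rw [Ne, Fin.ext_iff]; simp; omega

lemma mem_update (x : DD n) (i : Fin n) (v : Fin 3) (hv : v ≠ 0)
    (hnext : ∀ (h : (i : ℕ) + 1 < n), x.1 ⟨(i : ℕ) + 1, h⟩ ≠ 0) :
    ∀ (j : ℕ) (h : j + 1 < n), update x.1 i v ⟨j + 1, h⟩ = 0 →
      update x.1 i v ⟨j, Nat.lt_of_succ_lt h⟩ = 0 := by
  intro j hj hz
  by_cases h1 : (⟨j + 1, hj⟩ : Fin n) = i
  · rw [h1, update_self] at hz; exact absurd hz hv
  · rw [update_of_ne h1] at hz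
    by_cases h2 : (⟨j, Nat.lt_of_succ_lt hj⟩ : Fin n) = i
    · exfalso
      apply hnext (by rw [← h2]; exact hj)
      have : (⟨(i : ℕ) + 1, by rw [← h2]; exact hj⟩ : Fin n) = ⟨j + 1, hj⟩ := by
        ext; simp [← h2]
      rw [this]; exact hz
    · rw [update_of_ne h2]; exact x.2 j hj hz

lemma rk_update (x : DD n) (i : Fin n) (v : Fin 3) (hm) (hv : (v : ℕ) = (x.1 i : ℕ) + 1) :
    rk (⟨update x.1 i v, hm⟩ : DD n) = rk x + 1 := by
  unfold rk
  simp only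
  have : ∀ j, ((update x.1 i v) j : ℕ) = update (fun j => (x.1 j : ℕ)) i (v : ℕ) j := by
    intro j; by_cases hj : j = i
    · subst hj; simp
    · simp [update_of_ne hj]
  rw [Finset.sum_congr rfl (fun j _ => this j), Finset.sum_update_of_mem (mem_univ i),
    Finset.sum_eq_add_sum_sdiff_singleton_of_mem (mem_univ i) (fun j => (x.1 j : ℕ))]
  omega

lemma exists_rk_succ_between {x y : DD n} (hxy : x ≤ y) (hne : x ≠ y) :
    ∃ z : DD n, x ≤ z ∧ z ≤ y ∧ rk z = rk x + 1 := by
  have hle := le_iff.mp hxy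
  have hex : ∃ i, (x.1 i : ℕ) < (y.1 i : ℕ) := by
    by_contra h
    push_neg at h
    exact hne (Subtype.ext (funext fun i => Fin.ext (le_antisymm (hle i) (h i))))
  by_cases hcase : ∃ i, x.1 i ≠ 0 ∧ (x.1 i : ℕ) < (y.1 i : ℕ)
  · obtain ⟨i, hi0, hilt⟩ := hcase
    have hx1 : (x.1 i : ℕ) = 1 := by
      have := fin3_ne_zero_iff.mp hi0
      have h2 := (y.1 i).2
      omega
    refine ⟨⟨update x.1 i 2, mem_update x i 2 (by decide) (fun h => ?_)⟩, ?_, ?_, ?_⟩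
    · exact nonzero_up x (by rw [Fin.le_def]; simp) hi0
    · rw [le_iff]; intro j
      by_cases hj : j = i
      · subst hj; simp [hx1]
      · simp [update_of_ne hj]
    · rw [le_iff]; intro j
      by_cases hj : j = i
      · subst hj
        have h2 := (y.1 j).2
        simp only [update_self]
        omega
      · simp only [update_of_ne hj]; exact hle j
    · exact rk_update x i 2 _ (by omega)
  · push_neg at hcase
    obtain ⟨i0, hi0⟩ := hex
    have hxi0 : x.1 i0 = 0 := by
      by_contra h
      exact absurd hi0 (not_lt.mpr (hcase i0 h))
    set Z : Finset (Fin n) := Finset.univ.filter (fun j => x.1 j = 0) with hZ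
    have hZne : Z.Nonempty := ⟨i0, by simp [hZ, hxi0]⟩
    set i := Z.max' hZne with hi
    have hxi : x.1 i = 0 := by
      have := Z.max'_mem hZne
      simpa [hZ] using this
    have hmax : ∀ j, x.1 j = 0 → j ≤ i := by
      intro j hj
      exact Z.le_max' j (by simp [hZ, hj])
    have hyi : y.1 i ≠ 0 := by
      apply nonzero_up y (hmax i0 hxi0)
      rw [fin3_ne_zero_iff]
      omega
    refine ⟨⟨update x.1 i 1, mem_update x i 1 (by decide) (fun h => ?_)⟩, ?_, ?_, ?_⟩
    · intro hz
      have := hmax _ hz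
      rw [Fin.le_def] at this
      simp at this
    · rw [le_iff]; intro j
      by_cases hj : j = i
      · subst hj; simp [hxi]
      · simp [update_of_ne hj]
    · rw [le_iff]; intro j
      by_cases hj : j = i
      · subst hj
        simp only [update_self]
        have := fin3_ne_zero_iff.mp hyi
        simpa using this
      · simp only [update_of_ne hj]; exact hle j
    · apply rk_update
      rw [hxi]; rfl

lemma exists_betweenD {x y : DD n} (hxy : x ≤ y) (m : ℕ) (h1 : rk x ≤ m) (h2 : m ≤ rk y) :
    ∃ z, x ≤ z ∧ z ≤ y ∧ rk z = m := by
  induction m, h1 using Nat.le_induction with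
  | base => exact ⟨x, le_refl x, hxy, rfl⟩
  | succ m hm ih =>
    obtain ⟨z, hxz, hzy, hz⟩ := ih (by omega)
    have hne : z ≠ y := fun h => by subst h; omega
    obtain ⟨z', h1', h2', h3'⟩ := exists_rk_succ_between hzy hne
    exact ⟨z', le_trans hxz h1', h2', by omega⟩

section Chain
variable {C : Set (DD n)} (hC : IsMaxChain (· ≤ ·) C)
include hC

lemma mem_of_comparable (z : DD n) (h : ∀ x ∈ C, z ≤ x ∨ x ≤ z) : z ∈ C := by
  have hch : IsChain (· ≤ ·) (insert z C) := hC.1.insert (fun x hx _ => h x hx)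
  have := hC.2 hch (Set.subset_insert z C)
  rw [this]
  exact Set.mem_insert z C

lemma botD_mem : botD ∈ C := mem_of_comparable hC botD (fun x _ => Or.inl (botD_le x))
lemma topD_mem : topD ∈ C := mem_of_comparable hC topD (fun x _ => Or.inr (le_topD x))

lemma rank_surj (k : ℕ) (hk : k ≤ 2 * n) : ∃ x, x ∈ C ∧ rk x = k := by
  by_contra hcon
  push_neg at hcon
  have hk0 : k ≠ 0 := fun h => hcon botD (botD_mem hC) (h ▸ rk_botD)
  have hk2 : k ≠ 2 * n := fun h => hcon topD (topD_mem hC) (h ▸ rk_topD)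
  set A : Set (DD n) := {x | x ∈ C ∧ rk x < k} with hA
  set B : Set (DD n) := {x | x ∈ C ∧ k < rk x} with hB
  have hAne : A.Nonempty := ⟨botD, botD_mem hC, by rw [rk_botD]; omega⟩
  have hBne : B.Nonempty := ⟨topD, topD_mem hC, by rw [rk_topD]; omega⟩
  obtain ⟨a, haA, hamax⟩ := Set.Finite.exists_maximalFor id A (Set.toFinite A) hAne
  obtain ⟨b, hbB, hbmin⟩ := Set.Finite.exists_minimalFor id B (Set.toFinite B) hBne
  have haC := haA.1; have hbC := hbB.1
  have hAle : ∀ x ∈ A, x ≤ a := by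
    intro x hx
    rcases hC.1.total hx.1 haC with h | h
    · exact h
    · exact hamax hx h
  have hBle : ∀ x ∈ B, b ≤ x := by
    intro x hx
    rcases hC.1.total hx.1 hbC with h | h
    · exact hbmin hx h
    · exact h
  have hab : a ≤ b := by
    rcases hC.1.total haC hbC with h | h
    · exact h
    · have := rk_mono h
      have := haA.2; have := hbB.2
      omega
  obtain ⟨z, haz, hzb, hz⟩ := exists_betweenD hab k (le_of_lt haA.2) (le_of_lt hbB.2)
  refine hcon z (mem_of_comparable hC z fun x hx => ?_) hz
  have : rk x ≠ k := hcon x hx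
  rcases lt_or_gt_of_ne this with h | h
  · exact Or.inr (le_trans (hAle x ⟨hx, h⟩) haz)
  · exact Or.inl (le_trans hzb (hBle x ⟨hx, h⟩))

lemma rank_inj {x y : DD n} (hx : x ∈ C) (hy : y ∈ C) (h : rk x = rk y) : x = y := by
  rcases hC.1.total hx hy with h' | h'
  · by_contra hne; exact absurd h (ne_of_lt (rk_lt_rk h' hne))
  · by_contra hne; exact absurd h.symm (ne_of_lt (rk_lt_rk h' (Ne.symm hne)))

end Chain

def FlagD (n : ℕ) := {c : Fin (2 * n + 1) → DD n // Monotone c ∧ ∀ k, rk (c k) = (k : ℕ)}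

def toChain (c : FlagD n) : {C : Set (DD n) // IsMaxChain (· ≤ ·) C} := by
  refine ⟨Set.range c.1, ⟨?_, ?_⟩⟩
  · rintro _ ⟨i, rfl⟩ _ ⟨j, rfl⟩ _
    rcases le_total i j with h | h
    · exact Or.inl (c.2.1 h)
    · exact Or.inr (c.2.1 h)
  · intro t ht hsub
    refine Set.Subset.antisymm hsub (fun y hy => ?_)
    have hrk : rk y ≤ 2 * n := rk_le y
    set k : Fin (2 * n + 1) := ⟨rk y, by omega⟩ with hk
    have hck : c.1 k ∈ t := hsub ⟨k, rfl⟩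
    have hrkck : rk (c.1 k) = rk y := c.2.2 k
    have : y = c.1 k := by
      by_cases hne : y = c.1 k
      · exact hne
      · rcases ht.total hy hck with h | h
        · exact absurd hrkck.symm (ne_of_lt (rk_lt_rk h hne))
        · exact absurd hrkck (ne_of_lt (rk_lt_rk h (Ne.symm hne)))
    exact this ▸ ⟨k, rfl⟩

lemma toChain_bijective : Function.Bijective (toChain (n := n)) := by
  constructor
  · intro c c' h
    have hr : Set.range c.1 = Set.range c'.1 := congrArg Subtype.val h
    apply Subtype.ext; funext k
    have : c'.1 k ∈ Set.range c.1 := hr ▸ ⟨k, rfl⟩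
    obtain ⟨j, hj⟩ := this
    have : (j : ℕ) = (k : ℕ) := by
      have h1 := c.2.2 j
      have h2 := c'.2.2 k
      rw [hj] at h1; omega
    rwa [Fin.ext this] at hj
  · rintro ⟨C, hC⟩
    have hval : ∀ k : Fin (2 * n + 1), ∃ x, x ∈ C ∧ rk x = (k : ℕ) :=
      fun k => rank_surj hC k (by omega)
    refine ⟨⟨fun k => (hval k).choose, ?_, fun k => (hval k).choose_spec.2⟩, ?_⟩
    · intro k k' hkk'
      rcases hC.1.total (hval k).choose_spec.1 (hval k').choose_spec.1 with h | h
      · exact h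
      · have h1 := (hval k).choose_spec.2
        have h2 := (hval k').choose_spec.2
        have := rk_mono h
        have : k = k' := Fin.ext (by omega)
        subst this; exact le_refl _
    · apply Subtype.ext
      simp only [toChain]
      refine Set.Subset.antisymm ?_ ?_
      · rintro _ ⟨k, rfl⟩; exact (hval k).choose_spec.1
      · intro x hx
        set k : Fin (2 * n + 1) := ⟨rk x, by have := rk_le x; omega⟩ with hk
        have := rank_inj hC hx (hval k).choose_spec.1 ((hval k).choose_spec.2).symm
        exact ⟨k, this.symm⟩

def BB (n : ℕ) := {g : Fin (2 * n) ≃ Fin n × Fin 2 //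
  (∀ i : Fin n, g.symm (i, 0) < g.symm (i, 1)) ∧
  ∀ i j : Fin n, i < j → g.symm (j, 0) < g.symm (i, 0)}

lemma card_filter_lt (N k : ℕ) (hk : k ≤ N) :
    ∑ j : Fin N, (if (j : ℕ) < k then 1 else 0) = k := by
  rw [Fin.sum_univ_eq_sum_range (fun j => if j < k then 1 else 0) N,
    ← Finset.card_filter]
  have : (Finset.range N).filter (· < k) = Finset.range k := by
    ext j; simp [Finset.mem_filter]; omega
  rw [this, Finset.card_range]

def cfun (g : BB n) (k : Fin (2 * n + 1)) : DD n := by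
  refine ⟨fun i => if ((g.1.symm (i, 1) : ℕ)) < (k : ℕ) then 2
      else if ((g.1.symm (i, 0) : ℕ)) < (k : ℕ) then 1 else 0, ?_⟩
  intro i h hz
  dsimp only at hz ⊢
  split_ifs at hz with h1 h2
  · exact absurd hz (by decide)
  · exact absurd hz (by decide)
  · -- both ¬ h1 ¬ h2 : coordinate i+1 is 0
    have hanti := g.2.2 ⟨i, Nat.lt_of_succ_lt h⟩ ⟨i + 1, h⟩ (by simp [Fin.lt_def])
    have hord := g.2.1 (⟨i, Nat.lt_of_succ_lt h⟩ : Fin n)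
    rw [Fin.lt_def] at hanti hord
    rw [if_neg (by omega), if_neg (by omega)]

lemma cfun_rk (g : BB n) (k : Fin (2 * n + 1)) : rk (cfun g k) = (k : ℕ) := by
  unfold rk cfun
  have hper : ∀ i : Fin n,
      (if ((g.1.symm (i, 1) : ℕ)) < (k : ℕ) then (2 : Fin 3)
        else if ((g.1.symm (i, 0) : ℕ)) < (k : ℕ) then 1 else 0).val
      = ∑ e : Fin 2, (if ((g.1.symm (i, e) : ℕ)) < (k : ℕ) then 1 else 0) := by
    intro i
    have hord := g.2.1 i
    rw [Fin.lt_def] at hord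
    rw [Fin.sum_univ_two]
    split_ifs <;> simp <;> omega
  simp only
  rw [Finset.sum_congr rfl (fun i _ => hper i),
    ← Fintype.sum_prod_type (f := fun p : Fin n × Fin 2 =>
      if ((g.1.symm p : ℕ)) < (k : ℕ) then 1 else 0),
    Equiv.sum_comp g.1.symm (fun j : Fin (2 * n) => if ((j : ℕ)) < (k : ℕ) then 1 else 0)]
  exact card_filter_lt (2 * n) k (by omega)

def toFlag (g : BB n) : FlagD n := by
  refine ⟨cfun g, ?_, cfun_rk g⟩
  intro k k' hkk'
  rw [le_iff]
  intro i
  have h := Fin.le_def.mp hkk'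
  unfold cfun
  dsimp only
  split_ifs <;> simp <;> omega

lemma toFlag_injective : Function.Injective (toFlag (n := n)) := by
  intro g g' hgg'
  have hc : ∀ (k : Fin (2 * n + 1)) (i : Fin n), (cfun g k).1 i = (cfun g' k).1 i := by
    intro k i
    have := congrArg Subtype.val hgg'
    have h2 := congrFun this k
    exact congrFun (congrArg Subtype.val h2) i
  -- key: symm agree
  have key : ∀ (i : Fin n) (e : Fin 2), g.1.symm (i, e) = g'.1.symm (i, e) := by
    have main : ∀ (h1 h2 : BB n) (i : Fin n) (e : Fin 2),
        (∀ (k : Fin (2 * n + 1)) (i : Fin n), (cfun h1 k).1 i = (cfun h2 k).1 i) →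
        ¬ ((h1.1.symm (i, e) : ℕ) < (h2.1.symm (i, e) : ℕ)) := by
      intro h1 h2 i e hcc hlt
      have hb1 : (h1.1.symm (i, e) : ℕ) < 2 * n := (h1.1.symm (i, e)).2
      set k : Fin (2 * n + 1) := ⟨(h1.1.symm (i, e) : ℕ) + 1, by omega⟩ with hk
      have := hcc k i
      unfold cfun at this
      simp only at this
      have ho1 := h1.2.1 i
      have ho2 := h2.2.1 i
      rw [Fin.lt_def] at ho1 ho2
      rcases (Fin.exists_fin_two).mp ⟨e, rfl⟩ with rfl | rfl
      · -- e = 0 case handled by general tactic below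
        split_ifs at this <;> simp_all <;> omega
      · split_ifs at this <;> simp_all <;> omega
    intro i e
    have a1 := main g g' i e hc
    have a2 := main g' g i e (fun k i => (hc k i).symm)
    have : (g.1.symm (i, e) : ℕ) = (g'.1.symm (i, e) : ℕ) := by omega
    exact Fin.ext this
  apply Subtype.ext
  have hs : g.1.symm = g'.1.symm := Equiv.ext fun p => by obtain ⟨i, e⟩ := p; exact key i e
  calc g.1 = g.1.symm.symm := (Equiv.symm_symm _).symm
  _ = g'.1.symm.symm := by rw [hs]
  _ = g'.1 := Equiv.symm_symm _

lemma step_unique {f g : Fin n → ℕ} (hle : ∀ i, f i ≤ g i) (hs : ∑ i, g i = ∑ i, f i + 1) :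
    ∃ i, g i = f i + 1 ∧ ∀ j, j ≠ i → f j = g j := by
  have hsub : ∑ i, (g i - f i) = 1 := by
    have h1 : ∀ i ∈ Finset.univ, g i - f i + f i = g i := fun i _ => by have := hle i; omega
    have h2 : ∑ i, (g i - f i) + ∑ i, f i = ∑ i, g i := by
      rw [← Finset.sum_add_distrib]; exact Finset.sum_congr rfl h1
    omega
  have hne : ∃ i, g i - f i ≠ 0 := by
    by_contra h; push_neg at h
    rw [Finset.sum_congr rfl (fun i _ => h i)] at hsub; simp at hsub
  obtain ⟨i, hi⟩ := hne
  have herase : (g i - f i) + ∑ j ∈ Finset.univ.erase i, (g j - f j) = 1 := by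
    exact (Finset.add_sum_erase _ (fun j => g j - f j) (Finset.mem_univ i)).trans hsub
  refine ⟨i, by have := hle i; omega, fun j hj => ?_⟩
  have h0 : ∑ j ∈ Finset.univ.erase i, (g j - f j) = 0 := by omega
  have hz := (Finset.sum_eq_zero_iff).mp h0 j (Finset.mem_erase.mpr ⟨hj, Finset.mem_univ j⟩)
  have := hle j; omega

section Surj
variable (c : FlagD n)

def uu (k : Fin (2 * n + 1)) (i : Fin n) : ℕ := ((c.1 k).1 i : ℕ)

lemma uu_le (i : Fin n) (k : Fin (2 * n + 1)) : uu c k i ≤ 2 := by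
  have := ((c.1 k).1 i).2; unfold uu; omega

lemma uu_mono {k k' : Fin (2 * n + 1)} (h : k ≤ k') (i : Fin n) : uu c k i ≤ uu c k' i :=
  le_iff.mp (c.2.1 h) i

lemma uu_zero (i : Fin n) : uu c 0 i = 0 := by
  have h := c.2.2 0
  unfold rk at h
  simp only [Fin.val_zero] at h
  have := (Finset.sum_eq_zero_iff).mp h i (Finset.mem_univ i)
  exact this

lemma uu_last (i : Fin n) : uu c ⟨2 * n, by omega⟩ i = 2 := by
  have h := c.2.2 ⟨2 * n, by omega⟩
  unfold rk at h
  simp only at h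
  by_contra hne
  have hlt : uu c ⟨2 * n, by omega⟩ i < 2 := lt_of_le_of_ne (uu_le c i _) hne
  have : (∑ j, ((c.1 ⟨2 * n, by omega⟩).1 j : ℕ)) < ∑ _j : Fin n, 2 :=
    Finset.sum_lt_sum (fun j _ => uu_le c j _) ⟨i, Finset.mem_univ i, hlt⟩
  simp at this
  omega

lemma step (k : Fin (2 * n)) :
    ∃ i, uu c k.succ i = uu c k.castSucc i + 1 ∧
      ∀ j, j ≠ i → uu c k.castSucc j = uu c k.succ j := by
  apply step_unique (fun i => uu_mono c (Fin.castSucc_le_succ k) i)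
  have h1 := c.2.2 k.succ
  have h2 := c.2.2 k.castSucc
  unfold rk at h1 h2
  unfold uu
  rw [h1, h2, Fin.val_succ, Fin.coe_castSucc]

lemma crossing (i : Fin n) (v : ℕ) (hv1 : 1 ≤ v) (hv2 : v ≤ 2) :
    ∃! k : Fin (2 * n), uu c k.castSucc i < v ∧ v ≤ uu c k.succ i := by
  set F := Finset.univ.filter (fun k : Fin (2 * n + 1) => uu c k i < v) with hF
  have h0 : (0 : Fin (2 * n + 1)) ∈ F := by
    simp [hF, uu_zero c i]; omega
  set K := F.max' ⟨0, h0⟩ with hK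
  have hKmem : K ∈ F := F.max'_mem _
  have hKlt : uu c K i < v := by simpa [hF] using hKmem
  have hKne : (K : ℕ) ≠ 2 * n := by
    intro h
    have : K = ⟨2 * n, by omega⟩ := Fin.ext h
    rw [this, uu_last c i] at hKlt; omega
  have hKb : (K : ℕ) < 2 * n := by have := K.2; omega
  have hnext : ¬ ((⟨(K : ℕ) + 1, by omega⟩ : Fin (2 * n + 1)) ∈ F) := by
    intro hmem
    have := F.le_max' _ hmem
    rw [Fin.le_def] at this
    simp [← hK] at this
  have hnextv : v ≤ uu c ⟨(K : ℕ) + 1, by omega⟩ i := by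
    by_contra h
    exact hnext (by simp [hF]; omega)
  refine ⟨⟨(K : ℕ), hKb⟩, ⟨?_, ?_⟩, ?_⟩
  · have : (⟨(K : ℕ), hKb⟩ : Fin (2 * n)).castSucc = K := Fin.ext rfl
    rw [this]; exact hKlt
  · have : (⟨(K : ℕ), hKb⟩ : Fin (2 * n)).succ = ⟨(K : ℕ) + 1, by omega⟩ := Fin.ext rfl
    rw [this]; exact hnextv
  · intro k' ⟨ha, hb⟩
    apply Fin.ext
    show (k' : ℕ) = (K : ℕ)
    by_contra hne
    rcases Nat.lt_or_ge (k' : ℕ) (K : ℕ) with h | h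
    · -- k' < K as nat: k'.succ ≤ ⟨K⟩ : v ≤ uu k'.succ ≤ uu K < v
      have hle : uu c k'.succ i ≤ uu c K i := by
        apply uu_mono
        rw [Fin.le_def, Fin.val_succ]
        omega
      omega
    · have hlt : (K : ℕ) < (k' : ℕ) := by omega
      have hle : uu c ⟨(K : ℕ) + 1, by omega⟩ i ≤ uu c k'.castSucc i := by
        apply uu_mono
        rw [Fin.le_def, Fin.coe_castSucc]
        simpa using hlt
      omega

noncomputable def sfun (i : Fin n) : Fin (2 * n) :=
  (crossing c i 1 (by omega) (by omega)).exists.choose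

noncomputable def tfun (i : Fin n) : Fin (2 * n) :=
  (crossing c i 2 (by omega) (by omega)).exists.choose

lemma sfun_spec (i : Fin n) :
    uu c (sfun c i).castSucc i < 1 ∧ 1 ≤ uu c (sfun c i).succ i :=
  (crossing c i 1 (by omega) (by omega)).exists.choose_spec

lemma tfun_spec (i : Fin n) :
    uu c (tfun c i).castSucc i < 2 ∧ 2 ≤ uu c (tfun c i).succ i :=
  (crossing c i 2 (by omega) (by omega)).exists.choose_spec

lemma sfun_eq {i : Fin n} {k : Fin (2 * n)}
    (h : uu c k.castSucc i < 1 ∧ 1 ≤ uu c k.succ i) : sfun c i = k :=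
  (crossing c i 1 (by omega) (by omega)).unique (sfun_spec c i) h

lemma tfun_eq {i : Fin n} {k : Fin (2 * n)}
    (h : uu c k.castSucc i < 2 ∧ 2 ≤ uu c k.succ i) : tfun c i = k :=
  (crossing c i 2 (by omega) (by omega)).unique (tfun_spec c i) h

lemma sfun_lt_tfun (i : Fin n) : sfun c i < tfun c i := by
  have hs := sfun_spec c i
  have ht := tfun_spec c i
  rw [Fin.lt_def]
  by_contra hle
  push_neg at hle
  rcases Nat.eq_or_lt_of_le hle with heq | hlt
  · have : tfun c i = sfun c i := Fin.ext heq
    rw [this] at ht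
    obtain ⟨j0, hj0, hoth⟩ := step c (sfun c i)
    rcases eq_or_ne i j0 with rfl | hne
    · omega
    · have := hoth i hne; omega
  · -- tfun < sfun
    have hmono : uu c (tfun c i).succ i ≤ uu c (sfun c i).castSucc i := by
      apply uu_mono
      rw [Fin.le_def, Fin.val_succ, Fin.coe_castSucc]
      omega
    omega

noncomputable def Gfun (p : Fin n × Fin 2) : Fin (2 * n) :=
  if p.2 = 0 then sfun c p.1 else tfun c p.1

lemma Gfun0 (i : Fin n) : Gfun c (i, 0) = sfun c i := by simp [Gfun]
lemma Gfun1 (i : Fin n) : Gfun c (i, 1) = tfun c i := by simp [Gfun]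

lemma Gfun_chg (p : Fin n × Fin 2) :
    uu c (Gfun c p).castSucc p.1 ≠ uu c (Gfun c p).succ p.1 := by
  obtain ⟨i, e⟩ := p
  dsimp only
  rcases Fin.exists_fin_two.mp ⟨e, rfl⟩ with rfl | rfl
  · have := sfun_spec c i
    rw [Gfun0]
    omega
  · have := tfun_spec c i
    rw [Gfun1]
    omega

lemma Gfun_injective : Function.Injective (Gfun c) := by
  rintro ⟨i, e⟩ ⟨i', e'⟩ h
  obtain ⟨j0, hj0, hoth⟩ := step c (Gfun c (i, e))
  have hi : i = j0 := by
    by_contra hne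
    exact Gfun_chg c (i, e) (hoth i hne)
  have hi' : i' = j0 := by
    by_contra hne
    exact Gfun_chg c (i', e') (by rw [← h]; exact hoth i' hne)
  obtain rfl : i = i' := hi.trans hi'.symm
  rcases Fin.exists_fin_two.mp ⟨e, rfl⟩ with rfl | rfl <;>
    rcases Fin.exists_fin_two.mp ⟨e', rfl⟩ with rfl | rfl
  · rfl
  · rw [Gfun0, Gfun1] at h
    exact absurd h (ne_of_lt (sfun_lt_tfun c i))
  · rw [Gfun1, Gfun0] at h
    exact absurd h.symm (ne_of_lt (sfun_lt_tfun c i))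
  · rfl

lemma Gfun_surjective : Function.Surjective (Gfun c) := by
  intro k
  obtain ⟨j0, hj0, hoth⟩ := step c k
  have hb := uu_le c j0 k.succ
  have hb2 := uu_le c j0 k.castSucc
  rcases Nat.lt_or_ge (uu c k.castSucc j0) 1 with h0 | h0
  · refine ⟨(j0, 0), ?_⟩
    rw [Gfun0]
    exact sfun_eq c ⟨h0, by omega⟩
  · refine ⟨(j0, 1), ?_⟩
    have : uu c k.castSucc j0 < 2 := by omega
    rw [Gfun1]
    exact tfun_eq c ⟨this, by omega⟩

lemma sfun_anti {i j : Fin n} (hij : i < j) : sfun c j < sfun c i := by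
  by_contra hle
  push_neg at hle
  have hne : sfun c i ≠ sfun c j := by
    intro h
    have : (i, (0 : Fin 2)) = (j, (0 : Fin 2)) := by
      apply Gfun_injective c
      rw [Gfun0, Gfun0]
      exact h
    exact absurd (congrArg Prod.fst this) (ne_of_lt hij)
  have hlt : sfun c i < sfun c j := lt_of_le_of_ne hle hne
  have h1 : 1 ≤ uu c (sfun c i).succ i := (sfun_spec c i).2
  have hnz : (c.1 (sfun c i).succ).1 i ≠ 0 := by
    rw [Ne, Fin.ext_iff]
    unfold uu at h1
    simp
    omega
  have hnzj := nonzero_up _ (le_of_lt hij) hnz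
  have h2 : 1 ≤ uu c (sfun c i).succ j := by
    rw [Ne, Fin.ext_iff] at hnzj
    unfold uu
    simp at hnzj
    omega
  have hmono : uu c (sfun c i).succ j ≤ uu c (sfun c j).castSucc j := by
    apply uu_mono
    rw [Fin.le_def, Fin.val_succ, Fin.coe_castSucc]
    rw [Fin.lt_def] at hlt
    omega
  have := (sfun_spec c j).1
  omega

lemma le_sfun_iff (i : Fin n) (k : Fin (2 * n + 1)) :
    1 ≤ uu c k i ↔ ((sfun c i : ℕ) < (k : ℕ)) := by
  constructor
  · intro h
    by_contra hle
    push_neg at hle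
    have : uu c k i ≤ uu c (sfun c i).castSucc i := by
      apply uu_mono
      rw [Fin.le_def, Fin.coe_castSucc]
      omega
    have := (sfun_spec c i).1
    omega
  · intro h
    have : uu c (sfun c i).succ i ≤ uu c k i := by
      apply uu_mono
      rw [Fin.le_def, Fin.val_succ]
      omega
    have := (sfun_spec c i).2
    omega

lemma le_tfun_iff (i : Fin n) (k : Fin (2 * n + 1)) :
    2 ≤ uu c k i ↔ ((tfun c i : ℕ) < (k : ℕ)) := by
  constructor
  · intro h
    by_contra hle
    push_neg at hle
    have : uu c k i ≤ uu c (tfun c i).castSucc i := by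
      apply uu_mono
      rw [Fin.le_def, Fin.coe_castSucc]
      omega
    have := (tfun_spec c i).1
    omega
  · intro h
    have : uu c (tfun c i).succ i ≤ uu c k i := by
      apply uu_mono
      rw [Fin.le_def, Fin.val_succ]
      omega
    have := (tfun_spec c i).2
    omega

end Surj

lemma cfun_def (g : BB n) (k : Fin (2 * n + 1)) (i : Fin n) :
  (cfun g k).1 i = if ((g.1.symm (i, 1) : ℕ)) < (k : ℕ) then 2
      else if ((g.1.symm (i, 0) : ℕ)) < (k : ℕ) then 1 else 0 := rfl

lemma toFlag_def (g : BB n) : (toFlag g).1 = cfun g := rfl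

lemma toFlag_surjective : Function.Surjective (toFlag (n := n)) := by
  intro c
  set G := Equiv.ofBijective (Gfun c) ⟨Gfun_injective c, Gfun_surjective c⟩ with hGdef
  have hG0 : ∀ i : Fin n, G (i, 0) = sfun c i := fun i => Gfun0 c i
  have hG1 : ∀ i : Fin n, G (i, 1) = tfun c i := fun i => Gfun1 c i
  refine ⟨⟨G.symm, ?_, ?_⟩, ?_⟩
  · intro i
    rw [Equiv.symm_symm, hG0, hG1]
    exact sfun_lt_tfun c i
  · intro i j hij
    rw [Equiv.symm_symm, hG0, hG0]
    exact sfun_anti c hij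
  · apply Subtype.ext
    show cfun _ = _
    funext k
    apply Subtype.ext
    funext i
    show (if ((G.symm.symm (i, 1) : ℕ)) < (k : ℕ) then (2 : Fin 3)
        else if ((G.symm.symm (i, 0) : ℕ)) < (k : ℕ) then 1 else 0) = _
    simp only [Equiv.symm_symm, hG0, hG1]
    have hle := uu_le c i k
    have h1 := le_sfun_iff c i k
    have h2 := le_tfun_iff c i k
    have : ((c.1 k).1 i : ℕ) = uu c k i := rfl
    split_ifs with hc1 hc2
    · apply Fin.ext; simp; omega
    · apply Fin.ext; simp; omega
    · apply Fin.ext; simp; omega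


lemma toFlag_bijective : Function.Bijective (toFlag (n := n)) :=
  ⟨toFlag_injective, toFlag_surjective⟩

lemma fin2_add_add : ∀ (a b : Fin 2), a + b + b = a := by decide
lemma fin2_self_add : ∀ (a : Fin 2), a + a = 0 := by decide

def pw (σ : Equiv.Perm (Fin n)) (ε : Fin n → Fin 2) : Equiv.Perm (Fin n × Fin 2) where
  toFun p := (σ p.1, p.2 + ε p.1)
  invFun p := (σ.symm p.1, p.2 + ε (σ.symm p.1))
  left_inv p := by
    obtain ⟨i, e⟩ := p
    simp [fin2_add_add]
  right_inv p := by
    obtain ⟨i, e⟩ := p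
    simp [fin2_add_add]

lemma pw_apply (σ : Equiv.Perm (Fin n)) (ε : Fin n → Fin 2) (i : Fin n) (e : Fin 2) :
    pw σ ε (i, e) = (σ i, e + ε i) := rfl

def Phi (x : BB n × ((Fin n → Fin 2) × Equiv.Perm (Fin n))) : Fin (2 * n) ≃ Fin n × Fin 2 :=
  x.1.1.trans (pw x.2.2 x.2.1)

-- the "min" function of an equiv
def mfun (h : Fin (2 * n) ≃ Fin n × Fin 2) (i : Fin n) : Fin (2 * n) :=
  min (h.symm (i, 0)) (h.symm (i, 1))

lemma mfun_fst (h : Fin (2 * n) ≃ Fin n × Fin 2) (i : Fin n) : (h (mfun h i)).1 = i := by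
  unfold mfun
  rcases min_cases (h.symm (i, 0)) (h.symm (i, 1)) with ⟨heq, _⟩ | ⟨heq, _⟩ <;>
    rw [heq] <;> simp

lemma mfun_injective (h : Fin (2 * n) ≃ Fin n × Fin 2) : Function.Injective (mfun h) := by
  intro i j hij
  have : (h (mfun h i)).1 = (h (mfun h j)).1 := by rw [hij]
  rwa [mfun_fst, mfun_fst] at this

lemma Phi_symm_apply (b : BB n) (ε : Fin n → Fin 2) (σ : Equiv.Perm (Fin n))
    (i : Fin n) (e : Fin 2) :
    (Phi (b, ε, σ)).symm (σ i, e) = b.1.symm (i, e + ε i) := by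
  unfold Phi
  rw [Equiv.symm_trans_apply]
  congr 1
  show (σ.symm (σ i), e + ε (σ.symm (σ i))) = (i, e + ε i)
  simp

lemma mfun_Phi (b : BB n) (ε : Fin n → Fin 2) (σ : Equiv.Perm (Fin n)) (i : Fin n) :
    mfun (Phi (b, ε, σ)) (σ i) = b.1.symm (i, 0) := by
  unfold mfun
  rw [Phi_symm_apply, Phi_symm_apply]
  have hlt := b.2.1 i
  rcases Fin.exists_fin_two.mp ⟨ε i, rfl⟩ with he | he <;> rw [he]
  · rw [show (0 : Fin 2) + 0 = 0 from rfl, show (1 : Fin 2) + 0 = 1 from rfl]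
    exact min_eq_left (le_of_lt hlt)
  · rw [show (0 : Fin 2) + 1 = 1 from rfl, show (1 : Fin 2) + 1 = 0 from rfl]
    exact min_eq_right (le_of_lt hlt)

lemma sort_exists (N : ℕ) (m : Fin n → Fin N) (hm : Function.Injective m) :
    ∃ σ : Equiv.Perm (Fin n), StrictAnti (m ∘ σ) := by
  refine ⟨(Fin.revPerm : Equiv.Perm (Fin n)).trans (Tuple.sort m), ?_⟩
  have hmono : Monotone (m ∘ Tuple.sort m) := Tuple.monotone_sort m
  have hsm : StrictMono (m ∘ Tuple.sort m) :=
    hmono.strictMono_of_injective (hm.comp (Equiv.injective _))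
  have hrev : StrictAnti (Fin.rev : Fin n → Fin n) := fun a b hab => Fin.rev_lt_rev.mpr hab
  exact hsm.comp_strictAnti hrev

lemma sort_unique {N : ℕ} (m : Fin n → Fin N) (hm : Function.Injective m)
    (σ σ' : Equiv.Perm (Fin n)) (h1 : StrictAnti (m ∘ σ)) (h2 : StrictAnti (m ∘ σ')) :
    σ = σ' := by
  have hrev : StrictAnti (Fin.rev : Fin n → Fin n) := fun a b hab => Fin.rev_lt_rev.mpr hab
  have hs1 : StrictMono ((m ∘ σ) ∘ Fin.rev) := h1.comp hrev
  have hs2 : StrictMono ((m ∘ σ') ∘ Fin.rev) := h2.comp hrev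
  have key : ∀ τ : Fin n → Fin n, Function.Surjective τ →
      Set.range (m ∘ τ) = Set.range m := fun τ hτ => hτ.range_comp m
  have hr1 : Set.range ((m ∘ σ) ∘ Fin.rev) = Set.range ((m ∘ σ') ∘ Fin.rev) := by
    rw [Function.comp_assoc, Function.comp_assoc,
      key _ ((Equiv.surjective σ).comp Fin.rev_surjective),
      key _ ((Equiv.surjective σ').comp Fin.rev_surjective)]
  have heq := (hs1.range_inj hs2).mp hr1
  apply Equiv.ext
  intro j
  have := congrFun heq (Fin.rev j)
  simp only [Function.comp_apply, Fin.rev_rev] at this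
  exact hm this

lemma Phi_injective : Function.Injective (Phi (n := n)) := by
  rintro ⟨b, ε, σ⟩ ⟨b', ε', σ'⟩ h
  have hm : Function.Injective (mfun (Phi (b, ε, σ))) := mfun_injective _
  have hA : ∀ i, mfun (Phi (b, ε, σ)) (σ i) = b.1.symm (i, 0) := mfun_Phi b ε σ
  have hA' : ∀ i, mfun (Phi (b, ε, σ)) (σ' i) = b'.1.symm (i, 0) := by
    rw [h]; exact mfun_Phi b' ε' σ'
  have hanti : StrictAnti (mfun (Phi (b, ε, σ)) ∘ σ) := by
    intro i j hij
    simp only [Function.comp_apply, hA]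
    exact b.2.2 i j hij
  have hanti' : StrictAnti (mfun (Phi (b, ε, σ)) ∘ σ') := by
    intro i j hij
    simp only [Function.comp_apply, hA']
    exact b'.2.2 i j hij
  have hσ : σ = σ' := sort_unique (mfun (Phi (b, ε, σ))) hm σ σ' hanti hanti'
  subst hσ
  have hε : ε = ε' := by
    funext i
    have e1 : (Phi (b, ε, σ)).symm (σ i, ε i) = mfun (Phi (b, ε, σ)) (σ i) := by
      rw [Phi_symm_apply, fin2_self_add]
      exact (hA i).symm
    have e2 : (Phi (b', ε', σ)).symm (σ i, ε' i) = mfun (Phi (b, ε, σ)) (σ i) := by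
      rw [Phi_symm_apply, fin2_self_add]
      exact (hA' i).symm
    rw [← h] at e2
    have h1 := e1.trans e2.symm
    have h2 := congrArg (Phi (b, ε, σ)) h1
    simp only [Equiv.apply_symm_apply] at h2
    exact (Prod.ext_iff.mp h2).2
  subst hε
  have hb : b.1 = b'.1 := by
    apply Equiv.ext
    intro k
    have := congrArg (fun (e : Fin (2 * n) ≃ Fin n × Fin 2) => e k) h
    simp only [Phi, Equiv.trans_apply] at this
    exact (pw σ ε).injective this
  have : b = b' := Subtype.ext hb
  rw [this]

lemma Phi_surjective : Function.Surjective (Phi (n := n)) := by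
  intro hh
  have hminj : Function.Injective (mfun hh) := mfun_injective hh
  obtain ⟨σ, hσ⟩ := sort_exists (2 * n) (mfun hh) hminj
  set ε : Fin n → Fin 2 := fun i => if hh.symm (σ i, 0) < hh.symm (σ i, 1) then 0 else 1 with hε
  set b : Fin (2 * n) ≃ Fin n × Fin 2 := hh.trans (pw σ ε).symm with hb
  have hbsymm : ∀ (i : Fin n) (e : Fin 2), b.symm (i, e) = hh.symm (σ i, e + ε i) := by
    intro i e
    rw [hb]
    simp only [Equiv.symm_trans_apply, Equiv.symm_symm]
    rfl
  have hne : ∀ i : Fin n, hh.symm (σ i, 0) ≠ hh.symm (σ i, 1) := by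
    intro i heq
    have := hh.symm.injective heq
    simp at this
  have hb0 : ∀ i, b.symm (i, 0) = mfun hh (σ i) := by
    intro i
    rw [hbsymm]
    unfold mfun
    by_cases hc : hh.symm (σ i, 0) < hh.symm (σ i, 1)
    · rw [hε]; simp only [if_pos hc]
      rw [show (0 : Fin 2) + 0 = 0 from rfl]
      exact (min_eq_left (le_of_lt hc)).symm
    · rw [hε]; simp only [if_neg hc]
      rw [show (0 : Fin 2) + 1 = 1 from rfl]
      have := lt_of_le_of_ne (not_lt.mp hc) (Ne.symm (hne i))
      exact (min_eq_right (le_of_lt this)).symm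
  have hcond1 : ∀ i : Fin n, b.symm (i, 0) < b.symm (i, 1) := by
    intro i
    rw [hb0, hbsymm]
    unfold mfun
    by_cases hc : hh.symm (σ i, 0) < hh.symm (σ i, 1)
    · rw [hε]; simp only [if_pos hc]
      rw [show (1 : Fin 2) + 0 = 1 from rfl, min_eq_left (le_of_lt hc)]
      exact hc
    · rw [hε]; simp only [if_neg hc]
      rw [show (1 : Fin 2) + 1 = 0 from rfl]
      have hlt := lt_of_le_of_ne (not_lt.mp hc) (Ne.symm (hne i))
      rw [min_eq_right (le_of_lt hlt)]
      exact hlt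
  have hcond2 : ∀ i j : Fin n, i < j → b.symm (j, 0) < b.symm (i, 0) := by
    intro i j hij
    rw [hb0, hb0]
    exact hσ hij
  refine ⟨⟨⟨b, hcond1, hcond2⟩, ε, σ⟩, ?_⟩
  show b.trans (pw σ ε) = hh
  apply Equiv.ext
  intro k
  rw [hb]
  simp

lemma Phi_bijective : Function.Bijective (Phi (n := n)) :=
  ⟨Phi_injective, Phi_surjective⟩

/-- The number of maximal chains in the stacked hypercube lattice `Σ_n C_1^n`,
represented as the subposet of `Fin n → Fin 3` (pointwise order) of tuples `x`
such that `x (i+1) = 0 → x i = 0`, is the odd double factorial `(2n-1)!! = (2n)!/(2^n n!)`. -/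
theorem stmt_0 (n : ℕ) :
    Nat.card {C : Set {x : Fin n → Fin 3 //
        ∀ (i : ℕ) (h : i + 1 < n), x ⟨i + 1, h⟩ = 0 → x ⟨i, Nat.lt_of_succ_lt h⟩ = 0} //
      IsMaxChain (· ≤ ·) C} * (2 ^ n * Nat.factorial n) = Nat.factorial (2 * n) := by
  have h1 : Nat.card {C : Set (DD n) // IsMaxChain (· ≤ ·) C} = Nat.card (BB n) := by
    rw [← Nat.card_eq_of_bijective _ (toChain_bijective (n := n)),
      ← Nat.card_eq_of_bijective _ (toFlag_bijective (n := n))]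
  have hphi := Nat.card_eq_of_bijective _ (Phi_bijective (n := n))
  rw [Nat.card_prod, Nat.card_prod] at hphi
  have hfun : Nat.card (Fin n → Fin 2) = 2 ^ n := by
    simp [Nat.card_eq_fintype_card]
  have hperm : Nat.card (Equiv.Perm (Fin n)) = Nat.factorial n := by
    simp [Nat.card_eq_fintype_card, Fintype.card_perm]
  have hequiv : Nat.card (Fin (2 * n) ≃ Fin n × Fin 2) = Nat.factorial (2 * n) := by
    rw [Nat.card_eq_fintype_card,
      Fintype.card_equiv ((finCongr (show 2 * n = n * 2 by ring)).trans finProdFinEquiv.symm)]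
    simp
  rw [hfun, hperm, hequiv] at hphi
  show Nat.card {C : Set (DD n) // IsMaxChain (· ≤ ·) C} * (2 ^ n * Nat.factorial n)
    = Nat.factorial (2 * n)
  rw [h1]
  exact hphi
end

section
/- Let m ≥ 1 and n be natural numbers, and consider the subposet S of the product poset (Fin n → Fin (m+1)) (pointwise order) consisting of those tuples x such that for every index i with i+1 < n, if x(i+1) = 0 then x(i) = 0. Then the number of maximal chains of S, multiplied by (m!)^n · n!, equals (m·n)!. Equivalently, the number of maximal chains of S is (mn)!/((m!)^n · n!). -/
open Finset
namespace Stmt1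
variable {m n : ℕ}

abbrev P (m n : ℕ) : Type := {x : Fin n → Fin (m + 1) //
    ∀ (i : ℕ) (h : i + 1 < n), x ⟨i + 1, h⟩ = 0 → x ⟨i, Nat.lt_of_succ_lt h⟩ = 0}

def r (x : P m n) : ℕ := ∑ i, (x.1 i : ℕ)

lemma le_iff {x y : P m n} : x ≤ y ↔ ∀ i, (x.1 i : ℕ) ≤ (y.1 i : ℕ) := by
  rw [← Subtype.coe_le_coe, Pi.le_def]
  exact forall_congr' fun i => Fin.le_def

lemma r_mono {x y : P m n} (h : x ≤ y) : r x ≤ r y :=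
  Finset.sum_le_sum fun i _ => (le_iff.1 h) i

lemma eq_of_le_of_r_le {x y : P m n} (h : x ≤ y) (hr : r y ≤ r x) : x = y := by
  have h2 := (Finset.sum_eq_sum_iff_of_le (fun i _ => (le_iff.1 h) i)).1
    (le_antisymm (r_mono h) hr)
  ext i
  exact (h2 i (mem_univ i))

lemma r_lt_of_lt {x y : P m n} (h : x < y) : r x < r y := by
  rcases lt_iff_le_and_ne.1 h with ⟨hle, hne⟩
  rcases lt_or_eq_of_le (r_mono hle) with h' | h'
  · exact h'
  · exact absurd (eq_of_le_of_r_le hle h'.ge) hne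

def pbot : P m n := ⟨fun _ => 0, fun _ _ _ => rfl⟩

lemma pbot_le (x : P m n) : pbot ≤ x := le_iff.2 fun i => Nat.zero_le _

lemma r_pbot : r (pbot : P m n) = 0 := by simp [r, pbot]

def ptop (hm : 1 ≤ m) : P m n :=
  ⟨fun _ => ⟨m, Nat.lt_succ_self m⟩, by
    intro i h h0
    exfalso
    have : m = 0 := by simpa [Fin.ext_iff] using h0
    omega⟩

lemma le_ptop (hm : 1 ≤ m) (x : P m n) : x ≤ ptop hm :=
  le_iff.2 fun i => by simpa [ptop] using Nat.lt_succ_iff.1 (x.1 i).2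

lemma r_ptop (hm : 1 ≤ m) : r (ptop hm : P m n) = m * n := by
  simp [r, ptop, Finset.sum_const, mul_comm]

lemma r_le (x : P m n) : r x ≤ m * n := by
  have : r x ≤ ∑ _i : Fin n, m := Finset.sum_le_sum fun i _ => Nat.lt_succ_iff.1 (x.1 i).2
  simpa [mul_comm] using this

lemma eq_pbot_of_r {x : P m n} (h : r x = 0) : x = pbot :=
  (eq_of_le_of_r_le (pbot_le x) (by simp [r_pbot, h])).symm

lemma eq_ptop_of_r (hm : 1 ≤ m) {x : P m n} (h : r x = m * n) : x = ptop hm :=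
  eq_of_le_of_r_le (le_ptop hm x) (by simp [r_ptop, h])

lemma step_exists {x y : P m n} (hle : x ≤ y) (hr : r x < r y) :
    ∃ z : P m n, x ≤ z ∧ z ≤ y ∧ r z = r x + 1 := by
  classical
  have hs : (univ.filter fun i : Fin n => (x.1 i : ℕ) < y.1 i).Nonempty := by
    by_contra hemp
    rw [Finset.not_nonempty_iff_eq_empty] at hemp
    have hall : ∀ i : Fin n, (y.1 i : ℕ) ≤ x.1 i := by
      intro i
      by_contra hlt
      have hmem : i ∈ univ.filter fun i : Fin n => (x.1 i : ℕ) < y.1 i := by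
        simp only [mem_filter, mem_univ, true_and]; omega
      rw [hemp] at hmem; exact absurd hmem (notMem_empty i)
    exact absurd (Finset.sum_le_sum fun i _ => hall i) (not_le.2 hr)
  set i₀ := (univ.filter fun i : Fin n => (x.1 i : ℕ) < y.1 i).max' hs with hi₀
  have hxi₀ : (x.1 i₀ : ℕ) < y.1 i₀ := by
    have h1 := (univ.filter fun i : Fin n => (x.1 i : ℕ) < y.1 i).max'_mem hs
    rw [mem_filter] at h1
    exact h1.2
  have hgt : ∀ j : Fin n, i₀ < j → (x.1 j : ℕ) = y.1 j := by
    intro j hj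
    by_contra hne
    have hlt : (x.1 j : ℕ) < y.1 j := lt_of_le_of_ne (le_iff.1 hle j) hne
    have := Finset.le_max' (univ.filter fun i : Fin n => (x.1 i : ℕ) < y.1 i) j
      (Finset.mem_filter.2 ⟨mem_univ j, hlt⟩)
    exact absurd (lt_of_lt_of_le hj this) (lt_irrefl _)
  have hbd : (x.1 i₀ : ℕ) + 1 < m + 1 := by
    have := (y.1 i₀).2; omega
  set zf : Fin n → Fin (m + 1) := Function.update x.1 i₀ ⟨(x.1 i₀ : ℕ) + 1, hbd⟩ with hzf
  have hz_apply : ∀ j : Fin n, (zf j : ℕ) = if j = i₀ then (x.1 i₀ : ℕ) + 1 else (x.1 j : ℕ) := by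
    intro j
    by_cases hj : j = i₀ <;> simp [hzf, Function.update_apply, hj]
  have hzmem : ∀ (i : ℕ) (h : i + 1 < n), zf ⟨i + 1, h⟩ = 0 → zf ⟨i, Nat.lt_of_succ_lt h⟩ = 0 := by
    intro j h h0
    by_cases hc2 : (⟨j, Nat.lt_of_succ_lt h⟩ : Fin n) = i₀
    · exfalso
      have hval : (i₀ : ℕ) = j := by rw [← hc2]
      have hc1 : (⟨j + 1, h⟩ : Fin n) ≠ i₀ := by
        intro he
        have : j + 1 = (i₀ : ℕ) := by rw [← he]
        omega
      have e1 : zf ⟨j + 1, h⟩ = x.1 ⟨j + 1, h⟩ := Function.update_of_ne hc1 _ _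
      rw [e1] at h0
      have hsucc : i₀ < (⟨j + 1, h⟩ : Fin n) := by
        rw [Fin.lt_def]
        have : ((⟨j + 1, h⟩ : Fin n) : ℕ) = j + 1 := rfl
        omega
      have hxy : (x.1 ⟨j + 1, h⟩ : ℕ) = y.1 ⟨j + 1, h⟩ := hgt _ hsucc
      have hx0 : (x.1 ⟨j + 1, h⟩ : ℕ) = 0 := by rw [h0]; rfl
      have hy0 : y.1 ⟨j + 1, h⟩ = 0 := by rw [Fin.ext_iff]; omega
      have := y.2 j h hy0
      rw [hc2] at this
      have : (y.1 i₀ : ℕ) = 0 := by rw [this]; rfl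
      omega
    · have e2 : zf ⟨j, Nat.lt_of_succ_lt h⟩ = x.1 ⟨j, Nat.lt_of_succ_lt h⟩ :=
        Function.update_of_ne hc2 _ _
      rw [e2]
      by_cases hc1 : (⟨j + 1, h⟩ : Fin n) = i₀
      · exfalso
        rw [hc1] at h0
        have : zf i₀ = ⟨(x.1 i₀ : ℕ) + 1, hbd⟩ := Function.update_self _ _ _
        rw [this] at h0
        have : (x.1 i₀ : ℕ) + 1 = 0 := by
          have := Fin.ext_iff.1 h0
          simpa using this
        omega
      · have e1 : zf ⟨j + 1, h⟩ = x.1 ⟨j + 1, h⟩ := Function.update_of_ne hc1 _ _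
        rw [e1] at h0
        exact x.2 j h h0
  refine ⟨⟨zf, hzmem⟩, ?_, ?_, ?_⟩
  · rw [le_iff]; intro j
    show (x.1 j : ℕ) ≤ (zf j : ℕ)
    rw [hz_apply]; split
    · next hj => subst hj; omega
    · omega
  · rw [le_iff]; intro j
    show (zf j : ℕ) ≤ (y.1 j : ℕ)
    rw [hz_apply]; split
    · next hj => subst hj; omega
    · exact le_iff.1 hle j
  · show (∑ j, ((zf j : ℕ))) = r x + 1
    have hz2 : ∀ j : Fin n, (zf j : ℕ) = (x.1 j : ℕ) + (if j = i₀ then 1 else 0) := by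
      intro j; rw [hz_apply]; split
      · next hj => subst hj; simp
      · simp
    rw [Finset.sum_congr rfl fun j _ => hz2 j, Finset.sum_add_distrib,
      Finset.sum_ite_eq' univ i₀ (fun _ => 1)]
    simp [r]

lemma insert_exists {x y : P m n} (hle : x ≤ y) {k : ℕ} (h1 : r x ≤ k) (h2 : k ≤ r y) :
    ∃ z : P m n, x ≤ z ∧ z ≤ y ∧ r z = k := by
  obtain ⟨d, hd⟩ : ∃ d, k - r x = d := ⟨_, rfl⟩
  induction d generalizing x with
  | zero => exact ⟨x, le_refl x, hle, by omega⟩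
  | succ d ih =>
    have hlt : r x < r y := by omega
    obtain ⟨z₁, hxz, hzy, hrz⟩ := step_exists hle hlt
    obtain ⟨z, h1z, h2z, h3z⟩ := ih hzy (by omega) (by omega)
    exact ⟨z, le_trans hxz h1z, h2z, h3z⟩

lemma cover_decomp {x y : P m n} (hle : x ≤ y) (hr : r y = r x + 1) :
    ∃ i : Fin n, (y.1 i : ℕ) = (x.1 i : ℕ) + 1 ∧ ∀ j, j ≠ i → y.1 j = x.1 j := by
  classical
  have hsum : ∑ i, ((y.1 i : ℕ) - (x.1 i : ℕ)) = 1 := by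
    have h1 : ∑ i, ((x.1 i : ℕ) + ((y.1 i : ℕ) - (x.1 i : ℕ))) = ∑ i, (y.1 i : ℕ) :=
      Finset.sum_congr rfl fun i _ => by
        have := le_iff.1 hle i; omega
    rw [Finset.sum_add_distrib] at h1
    have h2 : r x + ∑ i, ((y.1 i : ℕ) - (x.1 i : ℕ)) = r y := h1
    omega
  have hne : ∃ i, (y.1 i : ℕ) - (x.1 i : ℕ) ≠ 0 := by
    by_contra hall
    push_neg at hall
    rw [Finset.sum_congr rfl fun i _ => hall i] at hsum
    simp at hsum
  obtain ⟨i, hi⟩ := hne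
  have hdi : (y.1 i : ℕ) - (x.1 i : ℕ) = 1 := by
    have h1 : (y.1 i : ℕ) - (x.1 i : ℕ) ≤ ∑ j, ((y.1 j : ℕ) - (x.1 j : ℕ)) :=
      Finset.single_le_sum (f := fun j => (y.1 j : ℕ) - (x.1 j : ℕ))
        (fun _ _ => Nat.zero_le _) (mem_univ i)
    omega
  have herase : ∑ j ∈ univ.erase i, ((y.1 j : ℕ) - (x.1 j : ℕ)) = 0 := by
    rw [← Finset.sum_erase_add univ (fun j => (y.1 j : ℕ) - (x.1 j : ℕ)) (mem_univ i)] at hsum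
    omega
  refine ⟨i, by have := le_iff.1 hle i; omega, ?_⟩
  intro j hj
  have h0 : (y.1 j : ℕ) - (x.1 j : ℕ) = 0 :=
    (Finset.sum_eq_zero_iff.1 herase) j (by simp [hj])
  have hle' := le_iff.1 hle j
  rw [Fin.ext_iff]
  omega


/-! ### Words and prefix counts -/

def cnt (w : Fin (m * n) → Fin n) (k : ℕ) (i : Fin n) : ℕ :=
  #(univ.filter fun p : Fin (m * n) => (p : ℕ) < k ∧ w p = i)

lemma cnt_zero (w : Fin (m * n) → Fin n) (i : Fin n) : cnt w 0 i = 0 := by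
  simp [cnt]

lemma cnt_succ (w : Fin (m * n) → Fin n) {k : ℕ} (hk : k < m * n) (i : Fin n) :
    cnt w (k + 1) i = cnt w k i + if w ⟨k, hk⟩ = i then 1 else 0 := by
  classical
  have hsplit : (univ.filter fun p : Fin (m * n) => (p : ℕ) < k + 1 ∧ w p = i)
      = (univ.filter fun p : Fin (m * n) => (p : ℕ) < k ∧ w p = i)
        ∪ (univ.filter fun p : Fin (m * n) => (p : ℕ) = k ∧ w p = i) := by
    ext p
    simp only [mem_filter, mem_union, mem_univ, true_and]
    constructor
    · rintro ⟨h1, h2⟩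
      rcases Nat.lt_succ_iff_lt_or_eq.1 h1 with h | h
      · exact Or.inl ⟨h, h2⟩
      · exact Or.inr ⟨h, h2⟩
    · rintro (⟨h1, h2⟩ | ⟨h1, h2⟩)
      · exact ⟨by omega, h2⟩
      · exact ⟨by omega, h2⟩
  have hdisj : Disjoint (univ.filter fun p : Fin (m * n) => (p : ℕ) < k ∧ w p = i)
      (univ.filter fun p : Fin (m * n) => (p : ℕ) = k ∧ w p = i) := by
    rw [Finset.disjoint_left]
    intro p hp hq
    rw [mem_filter] at hp hq
    omega
  have hsec : (univ.filter fun p : Fin (m * n) => (p : ℕ) = k ∧ w p = i)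
      = if w ⟨k, hk⟩ = i then {(⟨k, hk⟩ : Fin (m * n))} else ∅ := by
    split
    · next hw =>
      ext p
      simp only [mem_filter, mem_univ, true_and, mem_singleton]
      constructor
      · rintro ⟨h1, _⟩
        exact Fin.ext h1
      · rintro rfl
        exact ⟨rfl, hw⟩
    · next hw =>
      ext p
      simp only [mem_filter, mem_univ, true_and, notMem_empty, iff_false]
      rintro ⟨h1, h2⟩
      exact hw (by rwa [show (⟨k, hk⟩ : Fin (m * n)) = p from (Fin.ext h1).symm])
  rw [cnt, hsplit, Finset.card_union_of_disjoint hdisj, hsec]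
  rcases em (w ⟨k, hk⟩ = i) with hw | hw <;> simp [hw, cnt]

lemma cnt_mono (w : Fin (m * n) → Fin n) {k k' : ℕ} (h : k ≤ k') (i : Fin n) :
    cnt w k i ≤ cnt w k' i := by
  apply Finset.card_le_card
  intro p hp
  rw [mem_filter] at hp ⊢
  exact ⟨hp.1, by omega, hp.2.2⟩

lemma cnt_stable (w : Fin (m * n) → Fin n) {k : ℕ} (h : m * n ≤ k) (i : Fin n) :
    cnt w k i = cnt w (m * n) i := by
  unfold cnt
  congr 1
  ext p
  simp only [mem_filter, mem_univ, true_and]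
  have := p.2
  omega

def Balanced (w : Fin (m * n) → Fin n) : Prop := ∀ i, cnt w (m * n) i = m

def Valid (w : Fin (m * n) → Fin n) : Prop :=
  ∀ (k j : ℕ) (h : j + 1 < n),
    cnt w k ⟨j + 1, h⟩ = 0 → cnt w k ⟨j, Nat.lt_of_succ_lt h⟩ = 0

lemma cnt_le {w : Fin (m * n) → Fin n} (hb : Balanced w) (k : ℕ) (i : Fin n) :
    cnt w k i ≤ m := by
  rcases le_or_gt k (m * n) with h | h
  · exact le_trans (cnt_mono w h i) (le_of_eq (hb i))
  · rw [cnt_stable w h.le i]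
    exact le_of_eq (hb i)

lemma card_filter_lt {N k : ℕ} (hk : k ≤ N) :
    #(univ.filter fun p : Fin N => (p : ℕ) < k) = k := by
  induction k with
  | zero => simp
  | succ k ih =>
    have hkN : k < N := hk
    have hsplit : (univ.filter fun p : Fin N => (p : ℕ) < k + 1)
        = (univ.filter fun p : Fin N => (p : ℕ) < k) ∪ {(⟨k, hkN⟩ : Fin N)} := by
      ext p
      simp only [mem_filter, mem_union, mem_univ, true_and, mem_singleton]
      constructor
      · intro h1
        rcases Nat.lt_succ_iff_lt_or_eq.1 h1 with h | h
        · exact Or.inl h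
        · exact Or.inr (Fin.ext h)
      · rintro (h | rfl)
        · exact Nat.lt_succ_of_lt h
        · exact Nat.lt_succ_self k
    have hdisj : Disjoint (univ.filter fun p : Fin N => (p : ℕ) < k)
        ({(⟨k, hkN⟩ : Fin N)} : Finset (Fin N)) := by
      rw [Finset.disjoint_left]
      intro p hp hq
      rw [mem_filter] at hp
      rw [mem_singleton] at hq
      subst hq
      exact absurd hp.2 (lt_irrefl k)
    rw [hsplit, Finset.card_union_of_disjoint hdisj, ih (by omega), card_singleton]

lemma sum_cnt (w : Fin (m * n) → Fin n) {k : ℕ} (hk : k ≤ m * n) :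
    ∑ i, cnt w k i = k := by
  classical
  have h1 : #(univ.filter fun p : Fin (m * n) => (p : ℕ) < k)
      = ∑ i, #((univ.filter fun p : Fin (m * n) => (p : ℕ) < k).filter fun p => w p = i) :=
    Finset.card_eq_sum_card_fiberwise fun p _ => mem_univ (w p)
  rw [card_filter_lt hk] at h1
  calc ∑ i, cnt w k i
      = ∑ i, #((univ.filter fun p : Fin (m * n) => (p : ℕ) < k).filter fun p => w p = i) :=
        Finset.sum_congr rfl fun i _ => by rw [cnt, Finset.filter_filter]
    _ = k := h1.symm

def vfun (hm : 1 ≤ m) (w : Fin (m * n) → Fin n) (hv : Valid w) (k : ℕ) : P m n :=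
  ⟨fun i => ⟨min (cnt w k i) m, by omega⟩, by
    intro j h h0
    have h0' : min (cnt w k ⟨j + 1, h⟩) m = 0 := by
      have := Fin.ext_iff.1 h0
      simpa using this
    have hc : cnt w k ⟨j + 1, h⟩ = 0 := by omega
    have := hv k j h hc
    rw [Fin.ext_iff]
    show min (cnt w k ⟨j, _⟩) m = (0 : Fin (m + 1)).val
    simp [this]⟩

lemma vfun_val (hm : 1 ≤ m) {w : Fin (m * n) → Fin n} (hb : Balanced w) (hv : Valid w)
    (k : ℕ) (i : Fin n) : ((vfun hm w hv k).1 i : ℕ) = cnt w k i := by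
  show min (cnt w k i) m = cnt w k i
  exact min_eq_left (cnt_le hb k i)

lemma r_vfun (hm : 1 ≤ m) {w : Fin (m * n) → Fin n} (hb : Balanced w) (hv : Valid w)
    {k : ℕ} (hk : k ≤ m * n) : r (vfun hm w hv k) = k := by
  unfold r
  rw [Finset.sum_congr rfl fun i _ => vfun_val hm hb hv k i]
  exact sum_cnt w hk

lemma vfun_mono (hm : 1 ≤ m) {w : Fin (m * n) → Fin n} (hv : Valid w)
    {k k' : ℕ} (h : k ≤ k') : vfun hm w hv k ≤ vfun hm w hv k' := by
  rw [le_iff]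
  intro i
  show min (cnt w k i) m ≤ min (cnt w k' i) m
  have := cnt_mono w h i
  omega

def chainOf (hm : 1 ≤ m) (w : Fin (m * n) → Fin n) (hv : Valid w) : Set (P m n) :=
  (vfun hm w hv) '' (Set.Iic (m * n))

lemma chainOf_isMaxChain (hm : 1 ≤ m) {w : Fin (m * n) → Fin n}
    (hb : Balanced w) (hv : Valid w) : IsMaxChain (· ≤ ·) (chainOf hm w hv) := by
  constructor
  · rintro _ ⟨k, hk, rfl⟩ _ ⟨k', hk', rfl⟩ _
    rcases le_total k k' with h | h
    · exact Or.inl (vfun_mono hm hv h)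
    · exact Or.inr (vfun_mono hm hv h)
  · intro D hD hsub
    refine Set.Subset.antisymm hsub fun y hy => ?_
    have hry : r y ≤ m * n := r_le y
    have hmem : vfun hm w hv (r y) ∈ chainOf hm w hv := ⟨r y, hry, rfl⟩
    have hrv : r (vfun hm w hv (r y)) = r y := r_vfun hm hb hv hry
    rcases eq_or_ne y (vfun hm w hv (r y)) with he | hne
    · rw [he]; exact hmem
    · rcases hD (hsub hmem) hy (Ne.symm hne) with h | h
      · exact absurd (eq_of_le_of_r_le h (by omega)).symm hne
      · exact absurd (eq_of_le_of_r_le h (by omega)) hne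


/-! ### Every maximal chain comes from a word -/

lemma mem_of_comparable {C : Set (P m n)} (hC : IsMaxChain (· ≤ ·) C) (z : P m n)
    (hcomp : ∀ c ∈ C, c ≤ z ∨ z ≤ c) : z ∈ C := by
  have hch : IsChain (· ≤ ·) (insert z C) :=
    hC.1.insert fun b hb _ => (hcomp b hb).symm
  have := hC.2 hch (Set.subset_insert z C)
  rw [this]
  exact Set.mem_insert z C

lemma pbot_mem {C : Set (P m n)} (hC : IsMaxChain (· ≤ ·) C) : pbot ∈ C :=
  mem_of_comparable hC pbot fun c _ => Or.inr (pbot_le c)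

lemma ptop_mem (hm : 1 ≤ m) {C : Set (P m n)} (hC : IsMaxChain (· ≤ ·) C) : ptop hm ∈ C :=
  mem_of_comparable hC (ptop hm) fun c _ => Or.inl (le_ptop hm c)

lemma rank_unique {C : Set (P m n)} (hC : IsMaxChain (· ≤ ·) C) {c c' : P m n}
    (hc : c ∈ C) (hc' : c' ∈ C) (h : r c = r c') : c = c' := by
  rcases eq_or_ne c c' with he | hne
  · exact he
  · rcases hC.1 hc hc' hne with h' | h'
    · exact eq_of_le_of_r_le h' h.ge
    · exact (eq_of_le_of_r_le h' h.le).symm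

lemma exists_rank (hm : 1 ≤ m) {C : Set (P m n)} (hC : IsMaxChain (· ≤ ·) C)
    {k : ℕ} (hk : k ≤ m * n) : ∃ c ∈ C, r c = k := by
  by_contra hno
  push_neg at hno
  have hbot := pbot_mem hC
  have htop := ptop_mem hm hC
  have hk0 : 0 < k := by
    rcases Nat.eq_zero_or_pos k with h | h
    · exact absurd (h ▸ r_pbot) (hno pbot hbot)
    · exact h
  have hkm : k < m * n := by
    rcases lt_or_eq_of_le hk with h | h
    · exact h
    · exact absurd (h ▸ r_ptop hm) (hno (ptop hm) htop)
  set A : Set (P m n) := {c | c ∈ C ∧ r c < k} with hA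
  set B : Set (P m n) := {c | c ∈ C ∧ k < r c} with hB
  have hAne : A.Nonempty := ⟨pbot, hbot, by rw [r_pbot]; omega⟩
  have hBne : B.Nonempty := ⟨ptop hm, htop, by rw [r_ptop hm]; omega⟩
  obtain ⟨x, hxA, hxmax⟩ := Set.Finite.exists_maximalFor id A (Set.toFinite A) hAne
  obtain ⟨y, hyB, hymin⟩ := Set.Finite.exists_minimalFor id B (Set.toFinite B) hBne
  have hxub : ∀ a ∈ A, a ≤ x := by
    intro a ha
    rcases eq_or_ne a x with he | hne
    · exact he.le
    · rcases hC.1 ha.1 hxA.1 hne with h' | h'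
      · exact h'
      · exact hxmax ha h'
  have hylb : ∀ b ∈ B, y ≤ b := by
    intro b hb
    rcases eq_or_ne b y with he | hne
    · exact he.ge
    · rcases hC.1 hyB.1 hb.1 hne.symm with h' | h'
      · exact h'
      · exact hymin hb h'
  have hxy : x ≤ y := by
    rcases eq_or_ne x y with he | hne
    · exact he.le
    · rcases hC.1 hxA.1 hyB.1 hne with h' | h'
      · exact h'
      · exact absurd (lt_of_le_of_lt (r_mono h') hxA.2) (by have := hyB.2; omega)
  obtain ⟨z, hxz, hzy, hrz⟩ := insert_exists hxy (le_of_lt hxA.2) (le_of_lt hyB.2)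
  refine absurd hrz (hno z (mem_of_comparable hC z fun c hc => ?_))
  have hrc := hno c hc
  rcases lt_or_gt_of_ne hrc with h' | h'
  · exact Or.inl (le_trans (hxub c ⟨hc, h'⟩) hxz)
  · exact Or.inr (le_trans hzy (hylb c ⟨hc, h'⟩))

lemma exists_word (hm : 1 ≤ m) {C : Set (P m n)} (hC : IsMaxChain (· ≤ ·) C) :
    ∃ (w : Fin (m * n) → Fin n) (hb : Balanced w) (hv : Valid w), chainOf hm w hv = C := by
  classical
  have hex : ∀ k : ℕ, k ≤ m * n → ∃ c ∈ C, r c = k := fun k hk => exists_rank hm hC hk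
  set v : ℕ → P m n := fun k => if h : k ≤ m * n then (hex k h).choose else pbot with hv
  have hvC : ∀ k (hk : k ≤ m * n), v k ∈ C ∧ r (v k) = k := by
    intro k hk
    have := (hex k hk).choose_spec
    simp only [hv, dif_pos hk]
    exact this
  have hstep : ∀ k (hk : k < m * n), v k ≤ v (k + 1) ∧ r (v (k + 1)) = r (v k) + 1 := by
    intro k hk
    obtain ⟨hm1, hr1⟩ := hvC k (le_of_lt hk)
    obtain ⟨hm2, hr2⟩ := hvC (k + 1) hk
    have hle : v k ≤ v (k + 1) := by
      rcases eq_or_ne (v k) (v (k + 1)) with he | hne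
      · exact he.le
      · rcases hC.1 hm1 hm2 hne with h' | h'
        · exact h'
        · exact absurd (r_mono h') (by omega)
    exact ⟨hle, by omega⟩
  have hcover : ∀ p : Fin (m * n), ∃ i : Fin n,
      ((v ((p : ℕ) + 1)).1 i : ℕ) = ((v (p : ℕ)).1 i : ℕ) + 1 ∧
        ∀ j, j ≠ i → (v ((p : ℕ) + 1)).1 j = (v (p : ℕ)).1 j := by
    intro p
    obtain ⟨hle, hr⟩ := hstep (p : ℕ) p.2
    exact cover_decomp hle hr
  choose w hws1 hws2 using hcover
  have hcnt : ∀ k, k ≤ m * n → ∀ i, cnt w k i = ((v k).1 i : ℕ) := by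
    intro k
    induction k with
    | zero =>
      intro _ i
      have h0 : v 0 = pbot := eq_pbot_of_r (hvC 0 (Nat.zero_le _)).2
      rw [cnt_zero, h0]
      rfl
    | succ k ih =>
      intro hk1 i
      have hk : k < m * n := hk1
      rw [cnt_succ w hk i, ih (le_of_lt hk) i]
      have e1 := hws1 ⟨k, hk⟩
      have e2 := hws2 ⟨k, hk⟩
      have hcast : ((⟨k, hk⟩ : Fin (m * n)) : ℕ) = k := rfl
      rw [hcast] at e1 e2
      rcases eq_or_ne (w ⟨k, hk⟩) i with he | hne
      · rw [if_pos he, ← he]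
        exact e1.symm
      · rw [if_neg hne, Nat.add_zero, e2 i (Ne.symm hne)]
  have hvtop : v (m * n) = ptop hm := eq_ptop_of_r hm (hvC (m * n) le_rfl).2
  have hb : Balanced w := by
    intro i
    rw [hcnt (m * n) le_rfl i, hvtop]
    rfl
  have hval : Valid w := by
    intro k j h h0
    rcases le_or_gt k (m * n) with hk | hk
    · rw [hcnt k hk] at h0 ⊢
      have h0' : (v k).1 ⟨j + 1, h⟩ = 0 := by rw [Fin.ext_iff]; exact h0
      have := (v k).2 j h h0'
      rw [this]
      rfl
    · rw [cnt_stable w hk.le] at h0 ⊢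
      rw [hcnt (m * n) le_rfl] at h0 ⊢
      have h0' : (v (m * n)).1 ⟨j + 1, h⟩ = 0 := by rw [Fin.ext_iff]; exact h0
      have := (v (m * n)).2 j h h0'
      rw [this]
      rfl
  refine ⟨w, hb, hval, ?_⟩
  have hveq : ∀ k, k ≤ m * n → vfun hm w hval k = v k := by
    intro k hk
    apply Subtype.ext
    funext i
    rw [Fin.ext_iff]
    show min (cnt w k i) m = ((v k).1 i : ℕ)
    rw [hcnt k hk i]
    exact min_eq_left (Nat.lt_succ_iff.1 ((v k).1 i).2)
  apply Set.Subset.antisymm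
  · rintro _ ⟨k, hk, rfl⟩
    rw [hveq k hk]
    exact (hvC k hk).1
  · intro c hc
    have hrc : r c ≤ m * n := r_le c
    have : c = v (r c) := rank_unique hC hc (hvC _ hrc).1 (hvC _ hrc).2.symm
    rw [this, ← hveq _ hrc]
    exact ⟨r c, hrc, rfl⟩

lemma chainOf_inj (hm : 1 ≤ m) {w w' : Fin (m * n) → Fin n}
    (hb : Balanced w) (hv : Valid w) (hb' : Balanced w') (hv' : Valid w')
    (h : chainOf hm w hv = chainOf hm w' hv') : w = w' := by
  have hkey : ∀ k, k ≤ m * n → ∀ i, cnt w k i = cnt w' k i := by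
    intro k hk i
    have hmem : vfun hm w hv k ∈ chainOf hm w' hv' := h ▸ ⟨k, hk, rfl⟩
    obtain ⟨k', hk', heq⟩ := hmem
    have : k' = k := by
      have := r_vfun hm hb' hv' (k := k') hk'
      rw [heq] at this
      rw [← this, r_vfun hm hb hv hk]
    rw [this] at heq
    have h3 := congrArg (fun z : P m n => (z.1 i : ℕ)) heq
    rw [vfun_val hm hb' hv' k i, vfun_val hm hb hv k i] at h3
    exact h3.symm
  funext p
  have hk : (p : ℕ) < m * n := p.2
  have h1 := cnt_succ w hk (w p)
  have h2 := cnt_succ w' hk (w p)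
  rw [Fin.eta] at h1 h2
  rw [hkey ((p : ℕ) + 1) hk (w p), hkey (p : ℕ) hk.le (w p)] at h1
  rw [h1] at h2
  have : (if w' p = w p then 1 else 0) = 1 := by
    rw [if_pos rfl] at h2
    omega
  by_contra hne
  rw [if_neg (fun hh => hne hh.symm)] at this
  omega


/-! ### First positions -/

def fiber (w : Fin (m * n) → Fin n) (i : Fin n) : Finset (Fin (m * n)) :=
  univ.filter fun p => w p = i

lemma fiber_card {w : Fin (m * n) → Fin n} (hb : Balanced w) (i : Fin n) :
    #(fiber w i) = m := by
  have h2 : #(fiber w i) = cnt w (m * n) i := by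
    rw [cnt, fiber]
    congr 1
    ext p
    simp only [mem_filter, mem_univ, true_and]
    exact ⟨fun hp => ⟨p.2, hp⟩, fun hp => hp.2⟩
  rw [h2, hb i]

lemma fiber_nonempty (hm : 1 ≤ m) {w : Fin (m * n) → Fin n} (hb : Balanced w) (i : Fin n) :
    (fiber w i).Nonempty :=
  Finset.card_pos.1 (by rw [fiber_card hb i]; omega)

def fp (hm : 1 ≤ m) {w : Fin (m * n) → Fin n} (hb : Balanced w) (i : Fin n) : Fin (m * n) :=
  (fiber w i).min' (fiber_nonempty hm hb i)

lemma fp_mem (hm : 1 ≤ m) {w : Fin (m * n) → Fin n} (hb : Balanced w) (i : Fin n) :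
    w (fp hm hb i) = i := by
  have := (fiber w i).min'_mem (fiber_nonempty hm hb i)
  simp only [fiber, mem_filter] at this
  exact this.2

lemma fp_inj (hm : 1 ≤ m) {w : Fin (m * n) → Fin n} (hb : Balanced w) :
    Function.Injective (fp hm hb) := by
  intro i j h
  rw [← fp_mem hm hb i, ← fp_mem hm hb j, h]

lemma fp_lt_iff (hm : 1 ≤ m) {w : Fin (m * n) → Fin n} (hb : Balanced w) (i : Fin n)
    (k : ℕ) : (fp hm hb i : ℕ) < k ↔ cnt w k i ≠ 0 := by
  constructor
  · intro h
    have hmem : fp hm hb i ∈ univ.filter fun p : Fin (m * n) => (p : ℕ) < k ∧ w p = i :=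
      Finset.mem_filter.2 ⟨mem_univ _, h, fp_mem hm hb i⟩
    rw [cnt]
    exact fun h0 => (by rw [Finset.card_eq_zero.1 h0] at hmem; exact absurd hmem (notMem_empty _))
  · intro h
    obtain ⟨p, hp⟩ := Finset.card_pos.1 (Nat.pos_of_ne_zero h)
    rw [mem_filter] at hp
    have h1 := Finset.min'_le (fiber w i) p
      (by simp only [fiber, mem_filter]; exact ⟨mem_univ _, hp.2.2⟩)
    have h2 : (fp hm hb i : ℕ) ≤ (p : ℕ) := h1
    omega

lemma valid_iff_fp (hm : 1 ≤ m) {w : Fin (m * n) → Fin n} (hb : Balanced w) :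
    Valid w ↔ ∀ (j : ℕ) (h : j + 1 < n),
      fp hm hb ⟨j + 1, h⟩ < fp hm hb ⟨j, Nat.lt_of_succ_lt h⟩ := by
  constructor
  · intro hv j h
    set a := fp hm hb ⟨j, Nat.lt_of_succ_lt h⟩ with ha
    have h1 : cnt w ((a : ℕ) + 1) ⟨j, Nat.lt_of_succ_lt h⟩ ≠ 0 :=
      (fp_lt_iff hm hb _ _).1 (Nat.lt_succ_self _)
    have h2 : cnt w ((a : ℕ) + 1) ⟨j + 1, h⟩ ≠ 0 := by
      intro h0
      exact h1 (hv _ j h h0)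
    have h3 := (fp_lt_iff hm hb ⟨j + 1, h⟩ _).2 h2
    have hne : (fp hm hb ⟨j + 1, h⟩ : ℕ) ≠ (a : ℕ) := by
      intro he
      have h4 := fp_inj hm hb (Fin.ext he :
        fp hm hb ⟨j + 1, h⟩ = fp hm hb ⟨j, Nat.lt_of_succ_lt h⟩)
      have : j + 1 = j := congrArg Fin.val h4
      omega
    rw [Fin.lt_def]
    omega
  · intro hfp k j h h0
    by_contra hne
    have h1 : (fp hm hb ⟨j, Nat.lt_of_succ_lt h⟩ : ℕ) < k := (fp_lt_iff hm hb _ k).2 hne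
    have h2 := hfp j h
    rw [Fin.lt_def] at h2
    exact absurd h0 (by
      apply (fp_lt_iff hm hb ⟨j + 1, h⟩ k).1
      omega)

lemma min'_congr {α : Type*} [LinearOrder α] (s t : Finset α) (h : s = t)
    (hs : s.Nonempty) (ht : t.Nonempty) : s.min' hs = t.min' ht := by
  subst h; rfl

lemma balanced_perm {w : Fin (m * n) → Fin n} (hb : Balanced w) (σ : Equiv.Perm (Fin n)) :
    Balanced (fun p => σ (w p)) := by
  intro i
  have hfil : (univ.filter fun p : Fin (m * n) => (p : ℕ) < m * n ∧ σ (w p) = i)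
      = univ.filter fun p : Fin (m * n) => (p : ℕ) < m * n ∧ w p = σ.symm i := by
    ext p
    simp only [mem_filter, mem_univ, true_and]
    rw [Equiv.apply_eq_iff_eq_symm_apply]
  rw [cnt, hfil, ← cnt]
  exact hb (σ.symm i)

lemma fp_perm (hm : 1 ≤ m) {w u : Fin (m * n) → Fin n} (hb : Balanced w) (hbu : Balanced u)
    (σ : Equiv.Perm (Fin n)) (hrel : ∀ p, u p = σ.symm (w p)) (i : Fin n) :
    fp hm hb i = fp hm hbu (σ.symm i) := by
  apply min'_congr
  ext p
  simp only [fiber, mem_filter, mem_univ, true_and, hrel p]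
  constructor
  · intro h; rw [h]
  · intro h; exact σ.symm.injective h

lemma strictAnti_of_adj {N : ℕ} {f : Fin n → Fin N}
    (h : ∀ (j : ℕ) (hj : j + 1 < n), f ⟨j + 1, hj⟩ < f ⟨j, Nat.lt_of_succ_lt hj⟩) :
    StrictAnti f := by
  have key : ∀ (d : ℕ) (a b : Fin n), (b : ℕ) = (a : ℕ) + d + 1 → f b < f a := by
    intro d
    induction d with
    | zero =>
      intro a b hbval
      have hj : (a : ℕ) + 1 < n := by have := b.2; omega
      have hb' : b = ⟨(a : ℕ) + 1, hj⟩ := Fin.ext (show (b : ℕ) = (a : ℕ) + 1 by omega)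
      rw [hb']
      have := h (a : ℕ) hj
      rwa [Fin.eta] at this
    | succ d ih =>
      intro a b hbval
      have hj : (a : ℕ) + 1 < n := by have := b.2; omega
      have h1 := h (a : ℕ) hj
      rw [Fin.eta] at h1
      have h2 := ih ⟨(a : ℕ) + 1, hj⟩ b
        (by have he : ((⟨(a : ℕ) + 1, hj⟩ : Fin n) : ℕ) = (a : ℕ) + 1 := rfl; omega)
      exact lt_trans h2 h1
  intro a b hab
  rw [Fin.lt_def] at hab
  exact key ((b : ℕ) - (a : ℕ) - 1) a b (by omega)

/-! ### The `n!` factor -/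

def WType (m n : ℕ) : Type := {w : Fin (m * n) → Fin n // Balanced w ∧ Valid w}

def BType (m n : ℕ) : Type := {w : Fin (m * n) → Fin n // Balanced w}

def F2 (hm : 1 ≤ m) : WType m n × Equiv.Perm (Fin n) → BType m n :=
  fun z => ⟨fun p => z.2.symm (z.1.1 p), balanced_perm z.1.2.1 z.2.symm⟩

lemma F2_bijective (hm : 1 ≤ m) : Function.Bijective (F2 (m := m) (n := n) hm) := by
  constructor
  · rintro ⟨⟨w, hbw, hvw⟩, σ⟩ ⟨⟨w', hbw', hvw'⟩, σ'⟩ heq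
    have hfun : (fun p => σ.symm (w p)) = (fun p => σ'.symm (w' p)) :=
      congrArg Subtype.val heq
    have hbu : Balanced (fun p => σ.symm (w p)) := balanced_perm hbw σ.symm
    have hrel : ∀ p, (fun p => σ.symm (w p)) p = σ.symm (w p) := fun p => rfl
    have hrel' : ∀ p, (fun p => σ.symm (w p)) p = σ'.symm (w' p) := fun p => congrFun hfun p
    have hf1 : ∀ i, fp hm hbw i = fp hm hbu (σ.symm i) := fp_perm hm hbw hbu σ hrel
    have hf2 : ∀ i, fp hm hbw' i = fp hm hbu (σ'.symm i) := fp_perm hm hbw' hbu σ' hrel'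
    have ha1 : StrictAnti (fun i => fp hm hbu (σ.symm i)) := by
      apply strictAnti_of_adj
      intro j hj
      have := (valid_iff_fp hm hbw).1 hvw j hj
      rwa [hf1, hf1] at this
    have ha2 : StrictAnti (fun i => fp hm hbu (σ'.symm i)) := by
      apply strictAnti_of_adj
      intro j hj
      have := (valid_iff_fp hm hbw').1 hvw' j hj
      rwa [hf2, hf2] at this
    have hm1 : StrictMono ((fun i => fp hm hbu (σ.symm i)) ∘ Fin.rev) :=
      fun a b hab => ha1 (Fin.rev_lt_rev.2 hab)
    have hm2 : StrictMono ((fun i => fp hm hbu (σ'.symm i)) ∘ Fin.rev) :=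
      fun a b hab => ha2 (Fin.rev_lt_rev.2 hab)
    have e0 : ∀ (τ : Equiv.Perm (Fin n)),
        Set.range ((fun i => fp hm hbu (τ.symm i)) ∘ Fin.rev) = Set.range (fp hm hbu) := by
      intro τ
      ext x
      constructor
      · rintro ⟨i, rfl⟩
        exact ⟨_, rfl⟩
      · rintro ⟨i, rfl⟩
        exact ⟨Fin.rev (τ i), by simp [Function.comp, Fin.rev_rev]⟩
    haveI : WellFoundedLT (Fin n) := inferInstance
    have heq2 := (StrictMono.range_inj (γ := Fin (m * n)) hm1 hm2).1 ((e0 σ).trans (e0 σ').symm)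
    have hcomp : ∀ i, fp hm hbu (σ.symm i) = fp hm hbu (σ'.symm i) := by
      intro i
      have := congrFun heq2 (Fin.rev i)
      simpa [Function.comp, Fin.rev_rev] using this
    have hσsymm : σ.symm = σ'.symm := by
      apply Equiv.ext
      intro i
      exact fp_inj hm hbu (hcomp i)
    have hσ : σ = σ' := by
      rw [← σ.symm_symm, hσsymm, σ'.symm_symm]
    have hww : w = w' := by
      funext p
      have h1 := congrFun hfun p
      rw [hσsymm] at h1
      exact σ'.symm.injective h1
    subst hσ
    subst hww
    rfl
  · rintro ⟨u, hbu⟩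
    have hgi : Function.Injective (fp hm hbu) := fp_inj hm hbu
    have hmono : StrictMono ((fp hm hbu) ∘ (Tuple.sort (fp hm hbu))) :=
      (Tuple.monotone_sort (fp hm hbu)).strictMono_of_injective
        (hgi.comp (Equiv.injective _))
    set ρ : Equiv.Perm (Fin n) := (Fin.revPerm).trans (Tuple.sort (fp hm hbu)) with hρ
    have hanti : StrictAnti (fun i => fp hm hbu (ρ i)) := by
      intro a b hab
      show fp hm hbu (Tuple.sort (fp hm hbu) (Fin.rev b))
        < fp hm hbu (Tuple.sort (fp hm hbu) (Fin.rev a))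
      exact hmono (Fin.rev_lt_rev.2 hab)
    have hbw : Balanced (fun p => ρ.symm (u p)) := balanced_perm hbu ρ.symm
    have hfpw : ∀ i, fp hm hbw i = fp hm hbu (ρ i) := by
      intro i
      have := fp_perm hm hbw hbu ρ.symm
        (fun p => by simp) i
      simpa using this
    have hvw : Valid (fun p => ρ.symm (u p)) := by
      rw [valid_iff_fp hm hbw]
      intro j hj
      rw [hfpw, hfpw]
      exact hanti (show (⟨j, Nat.lt_of_succ_lt hj⟩ : Fin n) < ⟨j + 1, hj⟩ from
        Fin.lt_def.2 (Nat.lt_succ_self j))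
    refine ⟨⟨⟨(fun p => ρ.symm (u p)), hbw, hvw⟩, ρ.symm⟩, ?_⟩
    apply Subtype.ext
    funext p
    show (ρ.symm).symm (ρ.symm (u p)) = u p
    simp


/-! ### The `(m!)^n` factor -/

lemma cnt_lt_m {u : Fin (m * n) → Fin n} (hb : Balanced u) (p : Fin (m * n)) :
    cnt u (p : ℕ) (u p) < m := by
  have h1 := cnt_succ u p.2 (u p)
  rw [Fin.eta] at h1
  rw [if_pos rfl] at h1
  have h2 := cnt_le hb ((p : ℕ) + 1) (u p)
  omega

lemma cnt_strict {u : Fin (m * n) → Fin n} {p q : Fin (m * n)}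
    (hpq : (p : ℕ) < (q : ℕ)) (hu : u p = u q) :
    cnt u (p : ℕ) (u p) < cnt u (q : ℕ) (u q) := by
  have h1 := cnt_succ u p.2 (u p)
  rw [Fin.eta, if_pos rfl] at h1
  have h2 : cnt u ((p : ℕ) + 1) (u p) ≤ cnt u (q : ℕ) (u p) := cnt_mono u (by omega) _
  rw [hu]
  rw [hu] at h1 h2
  omega

lemma pos_unique {u : Fin (m * n) → Fin n} {p q : Fin (m * n)}
    (hu : u p = u q) (hc : cnt u (p : ℕ) (u p) = cnt u (q : ℕ) (u q)) : p = q := by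
  rcases lt_trichotomy ((p : ℕ)) ((q : ℕ)) with h | h | h
  · exact absurd hc (Nat.ne_of_lt (cnt_strict h hu))
  · exact Fin.ext h
  · exact absurd hc.symm (Nat.ne_of_lt (cnt_strict h hu.symm))

lemma exists_cnt (hm : 1 ≤ m) {u : Fin (m * n) → Fin n} (hb : Balanced u)
    (i : Fin n) (t : ℕ) (ht : t < m) :
    ∃ p : Fin (m * n), u p = i ∧ cnt u (p : ℕ) i = t := by
  have hn : 0 < n := i.pos
  have hN : 1 ≤ m * n := Nat.one_le_iff_ne_zero.2 (by positivity)
  have hex : ∃ k, t < cnt u (k + 1) i :=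
    ⟨m * n - 1, by rw [show m * n - 1 + 1 = m * n by omega, hb i]; omega⟩
  classical
  have hspec : t < cnt u (Nat.find hex + 1) i := Nat.find_spec hex
  have hk_le : cnt u (Nat.find hex) i ≤ t := by
    rcases Nat.eq_zero_or_pos (Nat.find hex) with h0 | h0
    · rw [h0, cnt_zero]; omega
    · have hmin := Nat.find_min hex (m := Nat.find hex - 1) (by omega)
      push_neg at hmin
      rw [show Nat.find hex - 1 + 1 = Nat.find hex by omega] at hmin
      exact hmin
  have hkN : Nat.find hex < m * n := by
    by_contra hge
    push_neg at hge
    rw [cnt_stable u (by omega) i] at hspec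
    rw [cnt_stable u hge i] at hk_le
    omega
  have hstep := cnt_succ u hkN i
  rcases eq_or_ne (u ⟨Nat.find hex, hkN⟩) i with he | hne
  · rw [if_pos he] at hstep
    refine ⟨⟨Nat.find hex, hkN⟩, he, ?_⟩
    show cnt u (Nat.find hex) i = t
    omega
  · rw [if_neg hne] at hstep
    omega

def G1fun {u : Fin (m * n) → Fin n} (hb : Balanced u) (τ : Fin n → Equiv.Perm (Fin m)) :
    Fin (m * n) → Fin n × Fin m :=
  fun p => (u p, τ (u p) ⟨cnt u (p : ℕ) (u p), cnt_lt_m hb p⟩)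

lemma G1fun_snd {u : Fin (m * n) → Fin n} (hb : Balanced u) (τ : Fin n → Equiv.Perm (Fin m))
    {p : Fin (m * n)} {i : Fin n} {t : Fin m} (hup : u p = i)
    (hcnt : cnt u (p : ℕ) i = (t : ℕ)) : (G1fun hb τ p).2 = τ i t := by
  subst hup
  show τ (u p) ⟨cnt u (p : ℕ) (u p), cnt_lt_m hb p⟩ = τ (u p) t
  congr 1
  exact Fin.ext hcnt

lemma G1fun_bijective (hm : 1 ≤ m) {u : Fin (m * n) → Fin n} (hb : Balanced u)
    (τ : Fin n → Equiv.Perm (Fin m)) : Function.Bijective (G1fun hb τ) := by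
  rw [Fintype.bijective_iff_injective_and_card]
  constructor
  · intro p q hpq
    have h1 : u p = u q := congrArg Prod.fst hpq
    have e1 : (G1fun hb τ p).2 = τ (u q) ⟨cnt u (p : ℕ) (u p), cnt_lt_m hb p⟩ :=
      G1fun_snd hb τ h1 (congrArg (cnt u (p : ℕ)) h1).symm
    have e2 : (G1fun hb τ q).2 = τ (u q) ⟨cnt u (q : ℕ) (u q), cnt_lt_m hb q⟩ :=
      G1fun_snd hb τ rfl rfl
    have h3 : τ (u q) (⟨cnt u (p : ℕ) (u p), cnt_lt_m hb p⟩ : Fin m)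
        = τ (u q) (⟨cnt u (q : ℕ) (u q), cnt_lt_m hb q⟩ : Fin m) := by
      rw [← e1, ← e2, hpq]
    have h4 : cnt u (p : ℕ) (u p) = cnt u (q : ℕ) (u q) :=
      congrArg Fin.val ((τ (u q)).injective h3)
    exact pos_unique h1 h4
  · simp [mul_comm]

noncomputable def F1 (hm : 1 ≤ m) : BType m n × (Fin n → Equiv.Perm (Fin m)) →
    (Fin (m * n) ≃ Fin n × Fin m) :=
  fun z => Equiv.ofBijective (G1fun z.1.2 z.2) (G1fun_bijective hm z.1.2 z.2)

lemma F1_bijective (hm : 1 ≤ m) : Function.Bijective (F1 (m := m) (n := n) hm) := by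
  constructor
  · rintro ⟨⟨u, hbu⟩, τ⟩ ⟨⟨u', hbu'⟩, τ'⟩ heq
    have hfun : ∀ p, G1fun hbu τ p = G1fun hbu' τ' p := fun p => Equiv.ext_iff.1 heq p
    have huu : u = u' := funext fun p => congrArg Prod.fst (hfun p)
    subst huu
    have hττ : τ = τ' := by
      funext i
      apply Equiv.ext
      intro t
      obtain ⟨p, hup, hcnt⟩ := exists_cnt hm hbu i (t : ℕ) t.2
      have e1 : (G1fun hbu τ p).2 = τ i t := G1fun_snd hbu τ hup hcnt
      have e2 : (G1fun hbu' τ' p).2 = τ' i t := G1fun_snd hbu' τ' hup hcnt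
      rw [← e1, ← e2, hfun p]
    subst hττ
    rfl
  · intro e
    classical
    set u : Fin (m * n) → Fin n := fun p => (e p).1 with hu
    have hbu : Balanced u := by
      intro i
      have hcard : cnt u (m * n) i = #(univ.filter fun p : Fin (m * n) => u p = i) := by
        rw [cnt]
        congr 1
        ext p
        simp only [mem_filter, mem_univ, true_and]
        exact ⟨fun hp => hp.2, fun hp => ⟨p.2, hp⟩⟩
      rw [hcard]
      have hbij : #(univ.filter fun p : Fin (m * n) => u p = i)
          = #(({i} : Finset (Fin n)) ×ˢ (univ : Finset (Fin m))) := by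
        apply Finset.card_bij' (fun p _ => e p) (fun q _ => e.symm q)
        · intro p hp
          rw [mem_filter] at hp
          rw [Finset.mem_product, Finset.mem_singleton]
          exact ⟨hp.2, mem_univ _⟩
        · intro q hq
          rw [mem_filter]
          rw [Finset.mem_product, Finset.mem_singleton] at hq
          refine ⟨mem_univ _, ?_⟩
          show (e (e.symm q)).1 = i
          rw [Equiv.apply_symm_apply]
          exact hq.1
        · intro p _
          exact e.symm_apply_apply p
        · intro q _
          exact e.apply_symm_apply q
      rw [hbij, Finset.card_product, Finset.card_singleton, Finset.card_univ,
        Fintype.card_fin, one_mul]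
    have hex : ∀ (i : Fin n) (t : Fin m), ∃ p : Fin (m * n), u p = i ∧ cnt u (p : ℕ) i = (t : ℕ) :=
      fun i t => exists_cnt hm hbu i (t : ℕ) t.2
    choose pt hpt1 hpt2 using hex
    have hτinj : ∀ i : Fin n, Function.Injective (fun t : Fin m => (e (pt i t)).2) := by
      intro i t t' htt
      have hfst : (e (pt i t)).1 = (e (pt i t')).1 := by
        show u (pt i t) = u (pt i t')
        rw [hpt1 i t, hpt1 i t']
      have : e (pt i t) = e (pt i t') := Prod.ext hfst htt
      have hp : pt i t = pt i t' := e.injective this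
      apply Fin.ext
      rw [← hpt2 i t, ← hpt2 i t', hp]
    set τ : Fin n → Equiv.Perm (Fin m) :=
      fun i => Equiv.ofBijective _ (Finite.injective_iff_bijective.1 (hτinj i)) with hτ
    refine ⟨⟨⟨u, hbu⟩, τ⟩, ?_⟩
    apply Equiv.ext
    intro p
    show G1fun hbu τ p = e p
    have hfst : (G1fun hbu τ p).1 = (e p).1 := rfl
    have hsnd : (G1fun hbu τ p).2 = (e p).2 := by
      set t : Fin m := ⟨cnt u (p : ℕ) (u p), cnt_lt_m hbu p⟩ with ht
      have e1 : (G1fun hbu τ p).2 = τ (u p) t := rfl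
      have e2 : τ (u p) t = (e (pt (u p) t)).2 := rfl
      have hpp : pt (u p) t = p := by
        apply pos_unique (u := u)
        · rw [hpt1]
        · have c1 : cnt u ((pt (u p) t : Fin (m * n)) : ℕ) (u (pt (u p) t)) = (t : ℕ) := by
            rw [hpt1 (u p) t]
            exact hpt2 (u p) t
          rw [c1]
      rw [e1, e2, hpp]
    exact Prod.ext hfst hsnd

/-! ### Chains-to-words bijection -/

def F0 (hm : 1 ≤ m) : WType m n → {C : Set (P m n) // IsMaxChain (· ≤ ·) C} :=
  fun z => ⟨chainOf hm z.1 z.2.2, chainOf_isMaxChain hm z.2.1 z.2.2⟩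

lemma F0_bijective (hm : 1 ≤ m) : Function.Bijective (F0 (m := m) (n := n) hm) := by
  constructor
  · rintro ⟨w, hbw, hvw⟩ ⟨w', hbw', hvw'⟩ heq
    have h1 : chainOf hm w hvw = chainOf hm w' hvw' := congrArg Subtype.val heq
    exact Subtype.ext (chainOf_inj hm hbw hvw hbw' hvw' h1)
  · rintro ⟨C, hC⟩
    obtain ⟨w, hb, hv, hCw⟩ := exists_word hm hC
    exact ⟨⟨w, hb, hv⟩, Subtype.ext hCw⟩

end Stmt1

/-- The number of maximal chains in the stacked lattice `Σ_n C_{m-1}^n` (for `m ≥ 1`),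
represented as the subposet of `Fin n → Fin (m+1)` (pointwise order) of tuples `x`
such that `x (i+1) = 0 → x i = 0`, is `(mn)!/((m!)^n · n!)`. -/
theorem stmt_1 (m n : ℕ) (hm : 1 ≤ m) :
    Nat.card {C : Set {x : Fin n → Fin (m + 1) //
        ∀ (i : ℕ) (h : i + 1 < n), x ⟨i + 1, h⟩ = 0 → x ⟨i, Nat.lt_of_succ_lt h⟩ = 0} //
      IsMaxChain (· ≤ ·) C} * (Nat.factorial m ^ n * Nat.factorial n)
      = Nat.factorial (m * n) := by
  classical
  have h0 : Nat.card (Stmt1.WType m n)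
      = Nat.card {C : Set (Stmt1.P m n) // IsMaxChain (· ≤ ·) C} :=
    Nat.card_eq_of_bijective _ (Stmt1.F0_bijective hm)
  have h2 : Nat.card (Stmt1.WType m n × Equiv.Perm (Fin n)) = Nat.card (Stmt1.BType m n) :=
    Nat.card_eq_of_bijective _ (Stmt1.F2_bijective hm)
  have h1 : Nat.card (Stmt1.BType m n × (Fin n → Equiv.Perm (Fin m)))
      = Nat.card (Fin (m * n) ≃ Fin n × Fin m) :=
    Nat.card_eq_of_bijective _ (Stmt1.F1_bijective hm)
  rw [Nat.card_prod] at h2 h1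
  have hperm : Nat.card (Equiv.Perm (Fin n)) = Nat.factorial n := by
    rw [Nat.card_eq_fintype_card, Fintype.card_perm, Fintype.card_fin]
  have hfun : Nat.card (Fin n → Equiv.Perm (Fin m)) = Nat.factorial m ^ n := by
    rw [Nat.card_eq_fintype_card, Fintype.card_fun, Fintype.card_perm, Fintype.card_fin,
      Fintype.card_fin]
  have hequiv : Nat.card (Fin (m * n) ≃ Fin n × Fin m) = Nat.factorial (m * n) := by
    rw [Nat.card_eq_fintype_card,
      Fintype.card_equiv ((finCongr (mul_comm m n)).trans (finProdFinEquiv (m := n) (n := m)).symm),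
      Fintype.card_fin]
  rw [hperm] at h2
  rw [hfun, hequiv] at h1
  have hgoal : Nat.card {C : Set (Stmt1.P m n) // IsMaxChain (· ≤ ·) C}
      * (Nat.factorial m ^ n * Nat.factorial n) = Nat.factorial (m * n) := by
    rw [← h0, ← h1, ← h2]
    ring
  exact hgoal
end

section
/- Let m ≥ 1 and n be natural numbers, and consider the subposet S of the product poset (Fin n → Fin (m+1)) (pointwise order) consisting of those tuples x such that for every index i with i+1 < n, if x(i+1) = 0 then x(i) = 0. Then there is a bijection between the set of maximal chains of S and the set of partitions of a set with m·n elements (say Fin (m·n)) into blocks each of which has exactly m elements. -/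
section MaxChain
variable {α : Type*} [Preorder α]

lemma isMaxChain_iff_forall {C : Set α} :
    IsMaxChain (· ≤ ·) C ↔ IsChain (· ≤ ·) C ∧ ∀ z, (∀ c ∈ C, z ≤ c ∨ c ≤ z) → z ∈ C := by
  constructor
  · intro h
    refine ⟨h.1, fun z hz => ?_⟩
    have hch : IsChain (· ≤ ·) (insert z C) := h.1.insert fun b hb _ => hz b hb
    have := h.2 hch (Set.subset_insert z C)
    rw [this]
    exact Set.mem_insert z C
  · intro h
    refine ⟨h.1, fun t ht hsub => hsub.antisymm fun z hz => h.2 z fun c hc => ?_⟩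
    by_cases hzc : z = c
    · exact Or.inl hzc.le
    · exact ht.total hz (hsub hc)

end MaxChain

namespace Stmt2

variable {m n : ℕ}

abbrev SP (m n : ℕ) := {x : Fin n → Fin (m + 1) //
    ∀ (i : ℕ) (h : i + 1 < n), x ⟨i + 1, h⟩ = 0 → x ⟨i, Nat.lt_of_succ_lt h⟩ = 0}

def rk (x : SP m n) : ℕ := ∑ i, (x.1 i : ℕ)

lemma le_iff {x y : SP m n} : x ≤ y ↔ ∀ i, x.1 i ≤ y.1 i := Iff.rfl

lemma rk_le (x : SP m n) : rk x ≤ m * n := by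
  calc rk x ≤ ∑ _i : Fin n, m :=
        Finset.sum_le_sum fun i _ => Nat.lt_succ_iff.mp (x.1 i).isLt
  _ = m * n := by simp [Finset.sum_const, mul_comm]

lemma rk_lt_of_lt {x y : SP m n} (h : x < y) : rk x < rk y := by
  obtain ⟨hle, hne⟩ := lt_iff_le_and_ne.mp h
  have hex : ∃ i, x.1 i ≠ y.1 i := by
    by_contra hc
    push_neg at hc
    exact hne (Subtype.ext (funext hc))
  obtain ⟨i, hi⟩ := hex
  exact Finset.sum_lt_sum (fun j _ => by exact_mod_cast hle j)
    ⟨i, Finset.mem_univ i, by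
      have := hle i
      exact_mod_cast lt_of_le_of_ne this hi⟩

lemma eq_of_le_of_rk_le {x y : SP m n} (h : x ≤ y) (hr : rk y ≤ rk x) : x = y := by
  rcases eq_or_lt_of_le h with h' | h'
  · exact h'
  · exact absurd (rk_lt_of_lt h') (by omega)

lemma zero_mono (x : SP m n) : ∀ (d i : ℕ) (h : i + d < n),
    x.1 ⟨i + d, h⟩ = 0 → x.1 ⟨i, by omega⟩ = 0
  | 0, i, h, hx => hx
  | d+1, i, h, hx => zero_mono x d i (by omega) (x.2 (i+d) (by omega) hx)

lemma ne_zero_mono (x : SP m n) {i j : Fin n} (hij : i ≤ j) (h : x.1 i ≠ 0) :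
    x.1 j ≠ 0 := by
  intro hj
  apply h
  have e : (⟨(i : ℕ) + ((j : ℕ) - i), by omega⟩ : Fin n) = j := Fin.ext (by
    simp only []
    omega)
  exact zero_mono x ((j : ℕ) - i) i (by omega) (by rw [e]; exact hj)

def bo : SP m n := ⟨fun _ => 0, fun _ _ _ => rfl⟩

def tp : SP m n := ⟨fun _ => Fin.last m, fun _ _ hx => hx⟩

lemma bo_le (x : SP m n) : bo ≤ x := fun i => Fin.zero_le _

lemma le_tp (x : SP m n) : x ≤ tp := fun i => Fin.le_last _

lemma rk_bo : rk (bo : SP m n) = 0 := by simp [rk, bo]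

lemma rk_tp : rk (tp : SP m n) = m * n := by simp [rk, tp, Fin.last, mul_comm]

lemma update_mem (x : SP m n) (i : Fin n) (v : Fin (m+1)) (hv : v ≠ 0)
    (hnext : ∀ (h : (i : ℕ) + 1 < n), x.1 ⟨(i : ℕ) + 1, h⟩ ≠ 0) :
    ∀ (j : ℕ) (hj : j + 1 < n), Function.update x.1 i v ⟨j + 1, hj⟩ = 0 →
      Function.update x.1 i v ⟨j, Nat.lt_of_succ_lt hj⟩ = 0 := by
  intro j hj h0
  by_cases hji : (⟨j + 1, hj⟩ : Fin n) = i
  · rw [hji, Function.update_self] at h0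
    exact absurd h0 hv
  · rw [Function.update_of_ne hji] at h0
    by_cases hji' : (⟨j, Nat.lt_of_succ_lt hj⟩ : Fin n) = i
    · exfalso
      have : (i : ℕ) = j := by rw [← hji']
      apply hnext (by omega)
      convert h0 using 2
      exact Fin.ext (by simp [this])
    · rw [Function.update_of_ne hji']
      exact x.2 j hj h0

lemma succ_exists {x y : SP m n} (h : x < y) :
    ∃ z : SP m n, x < z ∧ z ≤ y ∧ rk z = rk x + 1 := by
  have hle : x.1 ≤ y.1 := h.le
  have hne : x ≠ y := h.ne
  set T : Finset (Fin n) := Finset.univ.filter (fun i => x.1 i < y.1 i) with hT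
  have hTne : T.Nonempty := by
    by_contra hc
    rw [Finset.not_nonempty_iff_eq_empty] at hc
    apply hne
    apply Subtype.ext; funext i
    have : i ∉ T := by rw [hc]; exact Finset.notMem_empty i
    simp only [hT, Finset.mem_filter, Finset.mem_univ, true_and, not_lt] at this
    exact le_antisymm (hle i) this
  set i := T.max' hTne with hi
  have hiT : i ∈ T := T.max'_mem hTne
  have hxy : x.1 i < y.1 i := by
    simpa [hT, Finset.mem_filter] using hiT
  have hvlt : (x.1 i : ℕ) + 1 < m + 1 := by
    have h1 : (x.1 i : ℕ) < (y.1 i : ℕ) := hxy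
    have h2 := (y.1 i).isLt
    omega
  set v : Fin (m+1) := ⟨(x.1 i : ℕ) + 1, hvlt⟩ with hv
  have hvne : v ≠ 0 := by
    intro h
    have h' := congrArg Fin.val h
    rw [hv] at h'
    simp at h'
  have hnext : ∀ (h : (i : ℕ) + 1 < n), x.1 ⟨(i : ℕ) + 1, h⟩ ≠ 0 := by
    intro h1 hcon
    have hyi : y.1 i ≠ 0 := by
      intro h0
      rw [h0] at hxy
      exact absurd hxy (by simp)
    have hyi1 : y.1 ⟨(i : ℕ) + 1, h1⟩ ≠ 0 := by
      intro h0
      apply hyi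
      have := y.2 (i : ℕ) h1 h0
      simpa using this
    have hmem : (⟨(i : ℕ) + 1, h1⟩ : Fin n) ∈ T := by
      simp only [hT, Finset.mem_filter, Finset.mem_univ, true_and]
      rw [hcon]
      exact Fin.pos_of_ne_zero hyi1
    have := T.le_max' _ hmem
    rw [← hi] at this
    have : (i : ℕ) + 1 ≤ (i : ℕ) := this
    omega
  refine ⟨⟨Function.update x.1 i v, update_mem x i v hvne hnext⟩, ?_, ?_, ?_⟩
  · apply lt_of_le_of_ne
    · intro j
      show x.1 j ≤ Function.update x.1 i v j
      by_cases hj : j = i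
      · subst hj
        rw [Function.update_self]
        exact Fin.le_def.mpr (Nat.le_succ _)
      · rw [Function.update_of_ne hj]
    · intro hcon
      have hval : x.1 i = Function.update x.1 i v i := congrFun (congrArg Subtype.val hcon) i
      rw [Function.update_self] at hval
      have : (x.1 i : ℕ) = (x.1 i : ℕ) + 1 := congrArg Fin.val hval
      omega
  · intro j
    show Function.update x.1 i v j ≤ y.1 j
    by_cases hj : j = i
    · subst hj
      rw [Function.update_self]
      exact hxy
    · rw [Function.update_of_ne hj]
      exact hle j
  · show (∑ j, ((Function.update x.1 i v j : Fin (m+1)) : ℕ)) = (∑ j, (x.1 j : ℕ)) + 1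
    rw [← Finset.add_sum_erase _ _ (Finset.mem_univ i),
        ← Finset.add_sum_erase _ (fun j => (x.1 j : ℕ)) (Finset.mem_univ i)]
    rw [Function.update_self]
    have heq : ∑ j ∈ Finset.univ.erase i, ((Function.update x.1 i v j : Fin (m+1)) : ℕ)
        = ∑ j ∈ Finset.univ.erase i, (x.1 j : ℕ) := by
      apply Finset.sum_congr rfl
      intro j hj
      rw [Function.update_of_ne (Finset.ne_of_mem_erase hj)]
    rw [heq]
    show (x.1 i : ℕ) + 1 + _ = _
    omega





lemma mem_of_comp {C : Set (SP m n)} (hC : IsMaxChain (· ≤ ·) C) {z : SP m n}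
    (hz : ∀ c ∈ C, z ≤ c ∨ c ≤ z) : z ∈ C :=
  (isMaxChain_iff_forall.mp hC).2 z hz

lemma bo_mem {C : Set (SP m n)} (hC : IsMaxChain (· ≤ ·) C) : bo ∈ C :=
  mem_of_comp hC fun c _ => Or.inl (bo_le c)

lemma tp_mem {C : Set (SP m n)} (hC : IsMaxChain (· ≤ ·) C) : tp ∈ C :=
  mem_of_comp hC fun c _ => Or.inr (le_tp c)

lemma exists_rk {C : Set (SP m n)} (hC : IsMaxChain (· ≤ ·) C) :
    ∀ k, k ≤ m * n → ∃ x, x ∈ C ∧ rk x = k := by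
  intro k
  induction k with
  | zero => exact fun _ => ⟨bo, bo_mem hC, rk_bo⟩
  | succ k ih =>
    intro hk
    obtain ⟨x, hxC, hx⟩ := ih (by omega)
    set U : Set (SP m n) := {c | c ∈ C ∧ x < c} with hU
    have hUne : U.Nonempty := by
      refine ⟨tp, tp_mem hC, lt_of_le_of_ne (le_tp x) ?_⟩
      intro hcon
      rw [hcon, rk_tp] at hx
      omega
    obtain ⟨y, hyU, hymin⟩ := Set.exists_min_image U rk (Set.toFinite U) hUne
    have hleast : ∀ c ∈ U, y ≤ c := by
      intro c hc
      by_cases hyc : y = c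
      · exact hyc.le
      rcases hC.1.total hyU.1 hc.1 with h' | h'
      · exact h'
      · rcases eq_or_lt_of_le h' with h'' | h''
        · exact h''.symm.le
        · have := rk_lt_of_lt h''
          have := hymin c hc
          omega
    obtain ⟨z, hxz, hzy, hrz⟩ := succ_exists hyU.2
    have hzC : z ∈ C := by
      apply mem_of_comp hC
      intro c hc
      rcases hC.1.total hc hxC with hcx | hxc
      · exact Or.inr (hcx.trans hxz.le)
      · rcases eq_or_lt_of_le hxc with h'' | h''
        · exact Or.inr (h'' ▸ hxz.le)
        · exact Or.inl (hzy.trans (hleast c ⟨hc, h''⟩))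
    exact ⟨z, hzC, by rw [hrz, hx]⟩

lemma unique_rk {C : Set (SP m n)} (hC : IsMaxChain (· ≤ ·) C) {x y : SP m n}
    (hx : x ∈ C) (hy : y ∈ C) (h : rk x = rk y) : x = y := by
  by_cases hxy : x = y
  · exact hxy
  rcases hC.1.total hx hy with h' | h'
  · exact eq_of_le_of_rk_le h' (by omega)
  · exact (eq_of_le_of_rk_le h' (by omega)).symm

def G (m n : ℕ) : Type :=
  {g : Fin (m * n + 1) → SP m n // Monotone g ∧ ∀ k, rk (g k) = (k : ℕ)}

noncomputable def elt {C : Set (SP m n)} (hC : IsMaxChain (· ≤ ·) C) (k : ℕ)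
    (hk : k ≤ m * n) : SP m n := (exists_rk hC k hk).choose

lemma elt_mem {C : Set (SP m n)} (hC : IsMaxChain (· ≤ ·) C) (k : ℕ) (hk : k ≤ m * n) :
    elt hC k hk ∈ C := (exists_rk hC k hk).choose_spec.1

lemma elt_rk {C : Set (SP m n)} (hC : IsMaxChain (· ≤ ·) C) (k : ℕ) (hk : k ≤ m * n) :
    rk (elt hC k hk) = k := (exists_rk hC k hk).choose_spec.2

lemma range_isMaxChain (g : G m n) : IsMaxChain (· ≤ ·) (Set.range g.1) := by
  rw [isMaxChain_iff_forall]
  constructor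
  · rintro a ⟨j, rfl⟩ b ⟨k, rfl⟩ _
    rcases le_total j k with h | h
    · exact Or.inl (g.2.1 h)
    · exact Or.inr (g.2.1 h)
  · intro z hz
    have hzle : rk z ≤ m * n := rk_le z
    set k : Fin (m * n + 1) := ⟨rk z, by omega⟩ with hk
    have hrk : rk (g.1 k) = rk z := g.2.2 k
    rcases hz (g.1 k) ⟨k, rfl⟩ with h | h
    · exact ⟨k, (eq_of_le_of_rk_le h (by omega)).symm⟩
    · exact ⟨k, eq_of_le_of_rk_le h (by omega)⟩

noncomputable def equivAG :
    {C : Set (SP m n) // IsMaxChain (· ≤ ·) C} ≃ G m n where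
  toFun C := ⟨fun k => elt C.2 (k : ℕ) (by omega),
    by
      constructor
      · intro j k hjk
        have hj := elt_rk C.2 (j : ℕ) (by omega)
        have hk := elt_rk C.2 (k : ℕ) (by omega)
        by_cases he : elt C.2 (j : ℕ) (by omega) = elt C.2 (k : ℕ) (by omega)
        · exact he.le
        rcases C.2.1.total (elt_mem C.2 (j : ℕ) (by omega)) (elt_mem C.2 (k : ℕ) (by omega))
          with h' | h'
        · exact h'
        · rcases eq_or_lt_of_le h' with h'' | h''
          · exact h''.symm.le
          · have := rk_lt_of_lt h''
            have : (j : ℕ) ≤ (k : ℕ) := hjk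
            omega
      · exact fun k => elt_rk C.2 (k : ℕ) (by omega)⟩
  invFun g := ⟨Set.range g.1, range_isMaxChain g⟩
  left_inv C := by
    apply Subtype.ext
    show Set.range _ = C.1
    apply Set.eq_of_subset_of_subset
    · rintro a ⟨k, rfl⟩
      exact elt_mem C.2 (k : ℕ) (by omega)
    · intro c hc
      have hcle : rk c ≤ m * n := rk_le c
      refine ⟨⟨rk c, by omega⟩, ?_⟩
      exact unique_rk C.2 (elt_mem C.2 (rk c) (by omega)) hc (by rw [elt_rk])
  right_inv g := by
    apply Subtype.ext
    funext k
    show elt (range_isMaxChain g) (k : ℕ) (by omega) = g.1 k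
    obtain ⟨j, hj⟩ := elt_mem (range_isMaxChain g) (k : ℕ) (by omega)
    have h1 : rk (g.1 j) = (j : ℕ) := g.2.2 j
    have h2 : rk (elt (range_isMaxChain g) (k : ℕ) (by omega)) = (k : ℕ) :=
      elt_rk (range_isMaxChain g) (k : ℕ) (by omega)
    have : (j : ℕ) = (k : ℕ) := by rw [← h1, hj, h2]
    rw [← hj, Fin.ext this]


lemma card_filter_lt {N k : ℕ} (hk : k ≤ N) :
    (Finset.univ.filter fun t : Fin N => (t : ℕ) < k).card = k := by
  have himg : Finset.univ.filter (fun t : Fin N => (t : ℕ) < k)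
      = Finset.image (Fin.castLE hk) Finset.univ := by
    ext t
    simp only [Finset.mem_filter, Finset.mem_univ, true_and, Finset.mem_image]
    constructor
    · intro h
      exact ⟨⟨(t : ℕ), h⟩, Fin.ext rfl⟩
    · rintro ⟨s, rfl⟩
      exact s.isLt
  rw [himg, Finset.card_image_of_injective _ (Fin.castLE_injective hk),
    Finset.card_univ, Fintype.card_fin]

lemma rk_zero_coord {x : SP m n} (h : rk x = 0) (i : Fin n) : x.1 i = 0 := by
  have := (Finset.sum_eq_zero_iff.mp h) i (Finset.mem_univ i)
  exact Fin.ext this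

lemma rk_top_coord {x : SP m n} (h : rk x = m * n) (i : Fin n) : (x.1 i : ℕ) = m := by
  by_contra hc
  have hlt : (x.1 i : ℕ) < m := lt_of_le_of_ne (Nat.lt_succ_iff.mp (x.1 i).isLt) hc
  have : rk x < ∑ _j : Fin n, m :=
    Finset.sum_lt_sum (fun j _ => Nat.lt_succ_iff.mp (x.1 j).isLt)
      ⟨i, Finset.mem_univ i, hlt⟩
  rw [Finset.sum_const, smul_eq_mul, Finset.card_univ, Fintype.card_fin,
    Nat.mul_comm n m] at this
  omega

lemma step_spec' {x y : SP m n} (hle : x ≤ y) (hr : rk y = rk x + 1) :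
    ∃ i : Fin n, (∀ j, j ≠ i → x.1 j = y.1 j) ∧ (y.1 i : ℕ) = (x.1 i : ℕ) + 1 := by
  have hle' : ∀ j, (x.1 j : ℕ) ≤ (y.1 j : ℕ) := fun j => hle j
  have hex : ∃ i, (x.1 i : ℕ) < (y.1 i : ℕ) := by
    by_contra hc
    push_neg at hc
    have : rk y ≤ rk x := Finset.sum_le_sum fun j _ => hc j
    omega
  obtain ⟨i, hi⟩ := hex
  have hsplit1 : (y.1 i : ℕ) + ∑ j ∈ Finset.univ.erase i, (y.1 j : ℕ) = rk y := by
    unfold rk; exact Finset.add_sum_erase _ (fun j => ((y.1 j : ℕ))) (Finset.mem_univ i)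
  have hsplit2 : (x.1 i : ℕ) + ∑ j ∈ Finset.univ.erase i, (x.1 j : ℕ) = rk x := by
    unfold rk; exact Finset.add_sum_erase _ (fun j => ((x.1 j : ℕ))) (Finset.mem_univ i)
  have hge : ∑ j ∈ Finset.univ.erase i, (x.1 j : ℕ)
      ≤ ∑ j ∈ Finset.univ.erase i, (y.1 j : ℕ) :=
    Finset.sum_le_sum fun j _ => hle' j
  have hyi : (y.1 i : ℕ) = (x.1 i : ℕ) + 1 := by omega
  have hsum_eq : ∑ j ∈ Finset.univ.erase i, (x.1 j : ℕ)
      = ∑ j ∈ Finset.univ.erase i, (y.1 j : ℕ) := by omega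
  refine ⟨i, fun j hj => ?_, hyi⟩
  have := (Finset.sum_eq_sum_iff_of_le (s := Finset.univ.erase i)
    fun j _ => hle' j).mp hsum_eq j (Finset.mem_erase.mpr ⟨hj, Finset.mem_univ j⟩)
  exact Fin.ext this

/-- the coordinate incremented at step `t` -/
noncomputable def wd (g : G m n) (t : Fin (m * n)) : Fin n :=
  (step_spec' (g.2.1 t.castSucc_le_succ)
    (by rw [g.2.2, g.2.2, Fin.val_succ, Fin.coe_castSucc])).choose

lemma wd_spec (g : G m n) (t : Fin (m * n)) :
    (∀ j, j ≠ wd g t → (g.1 t.castSucc).1 j = (g.1 t.succ).1 j) ∧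
      ((g.1 t.succ).1 (wd g t) : ℕ) = ((g.1 t.castSucc).1 (wd g t) : ℕ) + 1 :=
  (step_spec' (g.2.1 t.castSucc_le_succ)
    (by rw [g.2.2, g.2.2, Fin.val_succ, Fin.coe_castSucc])).choose_spec


lemma count_lemma (g : G m n) (k : ℕ) (hk : k ≤ m * n) (i : Fin n) :
    ((g.1 ⟨k, Nat.lt_succ_of_le hk⟩).1 i : ℕ)
      = (Finset.univ.filter fun t : Fin (m * n) => (t : ℕ) < k ∧ wd g t = i).card := by
  induction k with
  | zero =>
    rw [rk_zero_coord (by rw [g.2.2]) i]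
    simp
  | succ k ih =>
    have hk' : k ≤ m * n := by omega
    set t₀ : Fin (m * n) := ⟨k, by omega⟩ with ht₀
    have e1 : (⟨k + 1, Nat.lt_succ_of_le hk⟩ : Fin (m * n + 1)) = t₀.succ := rfl
    have e2 : (⟨k, Nat.lt_succ_of_le hk'⟩ : Fin (m * n + 1)) = t₀.castSucc := rfl
    have spec := wd_spec g t₀
    have hset : (Finset.univ.filter fun t : Fin (m * n) => (t : ℕ) < k + 1 ∧ wd g t = i)
        = (Finset.univ.filter fun t : Fin (m * n) => (t : ℕ) < k ∧ wd g t = i)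
          ∪ (Finset.univ.filter fun t : Fin (m * n) => t = t₀ ∧ wd g t = i) := by
      ext t
      simp only [Finset.mem_filter, Finset.mem_univ, true_and, Finset.mem_union]
      constructor
      · rintro ⟨h1, h2⟩
        rcases Nat.lt_succ_iff_lt_or_eq.mp h1 with h' | h'
        · exact Or.inl ⟨h', h2⟩
        · exact Or.inr ⟨Fin.ext h', h2⟩
      · rintro (⟨h1, h2⟩ | ⟨h1, h2⟩)
        · exact ⟨by omega, h2⟩
        · refine ⟨?_, h2⟩
          rw [h1]
          simp [ht₀]
    have hdisj : Disjoint
        (Finset.univ.filter fun t : Fin (m * n) => (t : ℕ) < k ∧ wd g t = i)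
        (Finset.univ.filter fun t : Fin (m * n) => t = t₀ ∧ wd g t = i) := by
      rw [Finset.disjoint_left]
      intro t h1 h2
      simp only [Finset.mem_filter, Finset.mem_univ, true_and] at h1 h2
      rw [h2.1] at h1
      simp [ht₀] at h1
    rw [hset, Finset.card_union_of_disjoint hdisj, ← ih hk']
    by_cases hwt : wd g t₀ = i
    · have hsingle : (Finset.univ.filter fun t : Fin (m * n) => t = t₀ ∧ wd g t = i)
          = {t₀} := by
        ext t
        simp only [Finset.mem_filter, Finset.mem_univ, true_and, Finset.mem_singleton]
        exact ⟨fun h => h.1, fun h => ⟨h, by rw [h]; exact hwt⟩⟩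
      rw [hsingle, Finset.card_singleton, e1, e2, ← hwt, spec.2]
    · have hempty : (Finset.univ.filter fun t : Fin (m * n) => t = t₀ ∧ wd g t = i)
          = ∅ := by
        ext t
        simp only [Finset.mem_filter, Finset.mem_univ, true_and,
          Finset.notMem_empty, iff_false, not_and]
        intro h
        rw [h]
        exact hwt
      rw [hempty, Finset.card_empty, e1, e2,
        spec.1 i fun hcon => hwt hcon.symm]
      omega

lemma wd_fiber_card (g : G m n) (i : Fin n) :
    (Finset.univ.filter fun t : Fin (m * n) => wd g t = i).card = m := by
  have h := count_lemma g (m * n) le_rfl i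
  have htop : ((g.1 ⟨m * n, Nat.lt_succ_of_le le_rfl⟩).1 i : ℕ) = m :=
    rk_top_coord (by rw [g.2.2]) i
  rw [htop] at h
  have hfc : (Finset.univ.filter fun t : Fin (m * n) => (t : ℕ) < m * n ∧ wd g t = i)
      = Finset.univ.filter fun t => wd g t = i := by
    apply Finset.filter_congr
    intro t _
    simp [t.isLt]
  rw [hfc] at h
  omega

lemma wd_cond (g : G m n) (t : Fin (m * n)) (j : Fin n) (h : wd g t < j) :
    ∃ s, s < t ∧ wd g s = j := by
  have spec := wd_spec g t
  have h1 : (g.1 t.succ).1 (wd g t) ≠ 0 := by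
    intro hcon
    have := spec.2
    rw [hcon] at this
    simp at this
  have h2 : (g.1 t.succ).1 j ≠ 0 := ne_zero_mono _ h.le h1
  have e1 : (⟨(t : ℕ) + 1, Nat.lt_succ_of_le t.isLt⟩ : Fin (m * n + 1)) = t.succ := rfl
  have hcount := count_lemma g ((t : ℕ) + 1) t.isLt j
  rw [e1] at hcount
  have hpos : 0 < (Finset.univ.filter
      fun s : Fin (m * n) => (s : ℕ) < (t : ℕ) + 1 ∧ wd g s = j).card := by
    rw [← hcount]
    exact Nat.pos_of_ne_zero fun hc => h2 (Fin.ext hc)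
  obtain ⟨s, hs⟩ := Finset.card_pos.mp hpos
  simp only [Finset.mem_filter, Finset.mem_univ, true_and] at hs
  refine ⟨s, ?_, hs.2⟩
  have hne : s ≠ t := by
    intro hcon
    rw [hcon] at hs
    rw [hs.2] at h
    exact lt_irrefl _ h
  have : (s : ℕ) ≠ (t : ℕ) := fun hc => hne (Fin.ext hc)
  exact Fin.lt_def.mpr (by omega)

def W (m n : ℕ) : Type :=
  {w : Fin (m * n) → Fin n //
    (∀ i, (Finset.univ.filter fun t => w t = i).card = m) ∧
    ∀ t j, w t < j → ∃ s, s < t ∧ w s = j}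

def cnt (w : Fin (m * n) → Fin n) (k : ℕ) (i : Fin n) : ℕ :=
  (Finset.univ.filter fun t : Fin (m * n) => (t : ℕ) < k ∧ w t = i).card

lemma cnt_le (w : W m n) (k : ℕ) (i : Fin n) : cnt w.1 k i ≤ m := by
  have hsub : (Finset.univ.filter fun t : Fin (m * n) => (t : ℕ) < k ∧ w.1 t = i)
      ⊆ Finset.univ.filter fun t => w.1 t = i := by
    intro t ht
    simp only [Finset.mem_filter, Finset.mem_univ, true_and] at ht ⊢
    exact ht.2
  have := Finset.card_le_card hsub
  rwa [w.2.1 i] at this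

def gw (w : W m n) : G m n :=
  ⟨fun k => ⟨fun i => ⟨cnt w.1 (k : ℕ) i, Nat.lt_succ_of_le (cnt_le w (k : ℕ) i)⟩, by
    intro j hj h0
    have h0' : cnt w.1 (k : ℕ) ⟨j + 1, hj⟩ = 0 := congrArg Fin.val h0
    apply Fin.ext
    show cnt w.1 (k : ℕ) ⟨j, Nat.lt_of_succ_lt hj⟩ = 0
    unfold cnt at h0' ⊢
    rw [Finset.card_eq_zero, Finset.eq_empty_iff_forall_notMem] at h0' ⊢
    intro t ht
    simp only [Finset.mem_filter, Finset.mem_univ, true_and] at ht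
    have hlt : w.1 t < (⟨j + 1, hj⟩ : Fin n) := by
      rw [ht.2]
      exact Fin.mk_lt_mk.mpr (Nat.lt_succ_self j)
    obtain ⟨s, hst, hs⟩ := w.2.2 t _ hlt
    refine h0' s (Finset.mem_filter.mpr ⟨Finset.mem_univ s, ?_, hs⟩)
    have : (s : ℕ) < (t : ℕ) := hst
    omega⟩, by
    intro k k' hkk' i
    show cnt w.1 (k : ℕ) i ≤ cnt w.1 (k' : ℕ) i
    unfold cnt
    apply Finset.card_le_card
    intro t ht
    simp only [Finset.mem_filter, Finset.mem_univ, true_and] at ht ⊢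
    have : (k : ℕ) ≤ (k' : ℕ) := hkk'
    exact ⟨by omega, ht.2⟩, by
    intro k
    show (∑ i, cnt w.1 (k : ℕ) i) = (k : ℕ)
    have hcard := Finset.card_eq_sum_card_fiberwise
      (s := Finset.univ.filter fun t : Fin (m * n) => (t : ℕ) < (k : ℕ))
      (t := Finset.univ) (f := w.1) (fun x _ => Finset.mem_univ _)
    simp only [Finset.filter_filter] at hcard
    rw [card_filter_lt (by omega : (k : ℕ) ≤ m * n)] at hcard
    unfold cnt
    exact hcard.symm⟩

noncomputable def equivGW : G m n ≃ W m n where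
  toFun g := ⟨wd g, wd_fiber_card g, wd_cond g⟩
  invFun := gw
  left_inv g := by
    apply Subtype.ext
    funext k
    apply Subtype.ext
    funext i
    apply Fin.ext
    rcases k with ⟨kv, hkv⟩
    show cnt (wd g) kv i = _
    unfold cnt
    exact (count_lemma g kv (by omega) i).symm
  right_inv w := by
    apply Subtype.ext
    funext t
    show wd (gw w) t = w.1 t
    by_contra hne
    have spec := wd_spec (gw w) t
    have heq := spec.1 (w.1 t) (fun h => hne h.symm)
    have hval : cnt w.1 (t : ℕ) (w.1 t) = cnt w.1 ((t : ℕ) + 1) (w.1 t) :=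
      congrArg Fin.val heq
    have hssub : (Finset.univ.filter fun s : Fin (m * n) => (s : ℕ) < (t : ℕ) ∧ w.1 s = w.1 t)
        ⊂ Finset.univ.filter fun s : Fin (m * n) => (s : ℕ) < (t : ℕ) + 1 ∧ w.1 s = w.1 t := by
      constructor
      · intro s hs
        simp only [Finset.mem_filter, Finset.mem_univ, true_and] at hs ⊢
        exact ⟨by omega, hs.2⟩
      · intro hsub
        have := hsub (Finset.mem_filter.mpr ⟨Finset.mem_univ t, by omega, rfl⟩)
        simp only [Finset.mem_filter, Finset.mem_univ, true_and] at this
        omega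
    have hlt := Finset.card_lt_card hssub
    unfold cnt at hval
    exact absurd hval (ne_of_lt hlt)

def Q (m n : ℕ) : Type :=
  {P : Finpartition (Finset.univ : Finset (Fin (m * n))) // ∀ p ∈ P.parts, p.card = m}

def fib (w : Fin (m * n) → Fin n) (i : Fin n) : Finset (Fin (m * n)) :=
  Finset.univ.filter fun t => w t = i

lemma fib_card (w : W m n) (i : Fin n) : (fib w.1 i).card = m := w.2.1 i

lemma fib_nonempty (hm : 1 ≤ m) (w : W m n) (i : Fin n) : (fib w.1 i).Nonempty := by
  rw [← Finset.card_pos, fib_card]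
  omega

lemma fib_injective (hm : 1 ≤ m) (w : W m n) : Function.Injective (fib w.1) := by
  intro i j hij
  obtain ⟨t, ht⟩ := fib_nonempty hm w i
  have ht' : t ∈ fib w.1 j := hij ▸ ht
  simp only [fib, Finset.mem_filter, Finset.mem_univ, true_and] at ht ht'
  rw [← ht, ht']

lemma fib_min_lt (hm : 1 ≤ m) (w : W m n) {i j : Fin n} (h : i < j) :
    (fib w.1 j).min < (fib w.1 i).min := by
  obtain ⟨a, ha⟩ := Finset.min_of_nonempty (fib_nonempty hm w i)
  have haf : a ∈ fib w.1 i := Finset.mem_of_min ha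
  have hwa : w.1 a = i := by
    simpa only [fib, Finset.mem_filter, Finset.mem_univ, true_and] using haf
  obtain ⟨s, hs, hws⟩ := w.2.2 a j (by rw [hwa]; exact h)
  have h1 : (fib w.1 j).min ≤ (s : WithTop (Fin (m * n))) :=
    Finset.min_le (by simp only [fib, Finset.mem_filter, Finset.mem_univ, true_and]; exact hws)
  calc (fib w.1 j).min ≤ (s : WithTop (Fin (m * n))) := h1
  _ < (a : WithTop (Fin (m * n))) := WithTop.coe_lt_coe.mpr hs
  _ = (fib w.1 i).min := ha.symm

lemma fib_min_lt_iff (hm : 1 ≤ m) (w : W m n) {i j : Fin n} :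
    (fib w.1 i).min < (fib w.1 j).min ↔ j < i := by
  constructor
  · intro h
    rcases lt_trichotomy j i with h' | h' | h'
    · exact h'
    · subst h'
      exact absurd h (lt_irrefl _)
    · exact absurd (fib_min_lt hm w h') (not_lt.mpr h.le)
  · exact fib_min_lt hm w

def pw (hm : 1 ≤ m) (w : W m n) : Finpartition (Finset.univ : Finset (Fin (m * n))) where
  parts := Finset.univ.image (fib w.1)
  supIndep := by
    rw [Finset.supIndep_iff_pairwiseDisjoint]
    rintro p hp q hq hpq
    simp only [Finset.coe_image, Set.mem_image, Finset.mem_coe] at hp hq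
    obtain ⟨i, _, rfl⟩ := hp
    obtain ⟨j, _, rfl⟩ := hq
    show Disjoint (fib w.1 i) (fib w.1 j)
    rw [Finset.disjoint_left]
    intro t ht ht'
    simp only [fib, Finset.mem_filter, Finset.mem_univ, true_and] at ht ht'
    exact hpq (by rw [← ht, ht'])
  sup_parts := by
    apply le_antisymm
    · exact Finset.sup_le fun p _ => le_top.trans_eq Finset.top_eq_univ
    · intro t _
      rw [Finset.mem_sup]
      exact ⟨fib w.1 (w.1 t), Finset.mem_image_of_mem _ (Finset.mem_univ _),
        by simp only [fib, id_eq, Finset.mem_filter, Finset.mem_univ, true_and]⟩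
  bot_notMem := by
    intro h
    rw [Finset.mem_image] at h
    obtain ⟨i, _, hi⟩ := h
    exact (fib_nonempty hm w i).ne_empty (by rw [hi]; rfl)

lemma pw_parts_card (hm : 1 ≤ m) (w : W m n) :
    ∀ p ∈ (pw hm w).parts, p.card = m := by
  intro p hp
  rw [pw, Finset.mem_image] at hp
  obtain ⟨i, _, rfl⟩ := hp
  exact fib_card w i

def idx (P : Q m n) (p : Finset (Fin (m * n))) : ℕ :=
  (P.1.parts.filter fun q => p.min < q.min).card

lemma parts_card (hm : 1 ≤ m) (P : Q m n) : P.1.parts.card = n := by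
  have h1 := P.1.sum_card_parts
  rw [Finset.card_univ, Fintype.card_fin] at h1
  rw [Finset.sum_const_nat (fun p hp => P.2 p hp)] at h1
  have h2 : m * P.1.parts.card = m * n := by
    rw [Nat.mul_comm]
    exact h1
  exact Nat.eq_of_mul_eq_mul_left hm h2

lemma min_injOn (P : Q m n) {p q : Finset (Fin (m * n))} (hp : p ∈ P.1.parts)
    (hq : q ∈ P.1.parts) (hne : p ≠ q) : p.min ≠ q.min := by
  intro h
  obtain ⟨a, ha⟩ := Finset.min_of_nonempty (P.1.nonempty_of_mem_parts hp)
  have ha' : a ∈ p := Finset.mem_of_min ha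
  have hb : a ∈ q := Finset.mem_of_min (by rw [← h]; exact ha)
  exact hne (P.1.eq_of_mem_parts hp hq ha' hb)

lemma idx_antitone (P : Q m n) {p q : Finset (Fin (m * n))}
    (hq : q ∈ P.1.parts) (h : p.min < q.min) : idx P q < idx P p := by
  apply Finset.card_lt_card
  constructor
  · intro r hr
    simp only [Finset.mem_filter] at hr ⊢
    exact ⟨hr.1, h.trans hr.2⟩
  · intro hsub
    have := hsub (Finset.mem_filter.mpr ⟨hq, h⟩)
    simp only [Finset.mem_filter] at this
    exact absurd this.2 (lt_irrefl _)

lemma idx_lt (hm : 1 ≤ m) (P : Q m n) {p : Finset (Fin (m * n))}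
    (hp : p ∈ P.1.parts) : idx P p < n := by
  have hsub : (P.1.parts.filter fun q => p.min < q.min) ⊆ P.1.parts.erase p := by
    intro q hq
    simp only [Finset.mem_filter] at hq
    exact Finset.mem_erase.mpr ⟨fun h => absurd (h ▸ hq.2) (lt_irrefl _), hq.1⟩
  have hle := Finset.card_le_card hsub
  rw [Finset.card_erase_of_mem hp, parts_card hm P] at hle
  have hn : 0 < n := by
    have h0 : 0 < P.1.parts.card := Finset.card_pos.mpr ⟨p, hp⟩
    rwa [parts_card hm P] at h0
  unfold idx
  omega

lemma idx_injOn (P : Q m n) {p q : Finset (Fin (m * n))} (hp : p ∈ P.1.parts)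
    (hq : q ∈ P.1.parts) (hne : p ≠ q) : idx P p ≠ idx P q := by
  rcases lt_or_gt_of_ne (min_injOn P hp hq hne) with h | h
  · exact (idx_antitone P hq h).ne'
  · exact (idx_antitone P hp h).ne

def wq (hm : 1 ≤ m) (P : Q m n) : Fin (m * n) → Fin n :=
  fun t => ⟨idx P (P.1.part t), idx_lt hm P (P.1.part_mem.mpr (Finset.mem_univ t))⟩

lemma idx_surj (hm : 1 ≤ m) (P : Q m n) (i : Fin n) :
    ∃ p, ∃ _ : p ∈ P.1.parts, idx P p = (i : ℕ) := by
  have hsurj := Finset.surj_on_of_inj_on_of_card_le (s := P.1.parts)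
    (t := (Finset.univ : Finset (Fin n)))
    (fun p hp => (⟨idx P p, idx_lt hm P hp⟩ : Fin n))
    (fun p hp => Finset.mem_univ _)
    (fun p q hp hq h => by
      by_contra hne
      exact idx_injOn P hp hq hne (congrArg Fin.val h))
    (by rw [parts_card hm P, Finset.card_univ, Fintype.card_fin])
  obtain ⟨p, hp, hip⟩ := hsurj i (Finset.mem_univ i)
  exact ⟨p, hp, (congrArg Fin.val hip).symm⟩

lemma wq_fiber (hm : 1 ≤ m) (P : Q m n) {p : Finset (Fin (m * n))}
    (hp : p ∈ P.1.parts) {i : Fin n} (hi : idx P p = (i : ℕ)) :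
    (Finset.univ.filter fun t => wq hm P t = i) = p := by
  ext t
  simp only [Finset.mem_filter, Finset.mem_univ, true_and]
  constructor
  · intro h
    have hval : idx P (P.1.part t) = idx P p := by
      rw [hi]
      exact congrArg Fin.val h
    have hpt : P.1.part t = p := by
      by_contra hne
      exact idx_injOn P (P.1.part_mem.mpr (Finset.mem_univ t)) hp hne hval
    rw [← hpt]
    exact P.1.mem_part (Finset.mem_univ t)
  · intro h
    apply Fin.ext
    show idx P (P.1.part t) = (i : ℕ)
    rw [P.1.part_eq_of_mem hp h, hi]

def wqW (hm : 1 ≤ m) (P : Q m n) : W m n := by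
  refine ⟨wq hm P, fun i => ?_, fun t j h => ?_⟩
  · obtain ⟨p, hp, hip⟩ := idx_surj hm P i
    rw [wq_fiber hm P hp hip]
    exact P.2 p hp
  · obtain ⟨q, hq, hiq⟩ := idx_surj hm P j
    set p := P.1.part t with hpdef
    have hp : p ∈ P.1.parts := P.1.part_mem.mpr (Finset.mem_univ t)
    have hlt : idx P p < idx P q := by
      rw [hiq]
      exact h
    have hpq : p ≠ q := fun hc => (hc ▸ hlt).ne rfl
    have hmin : q.min < p.min := by
      rcases lt_or_gt_of_ne (min_injOn P hp hq hpq) with h' | h'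
      · exact absurd (idx_antitone P hq h') (by omega)
      · exact h'
    have hqne : q.Nonempty := P.1.nonempty_of_mem_parts hq
    set s := q.min' hqne with hsdef
    have hsq : s ∈ q := q.min'_mem hqne
    have hst : s < t := by
      have h1 : (s : WithTop (Fin (m * n))) = q.min := Finset.coe_min' hqne
      have h2 : p.min ≤ (t : WithTop (Fin (m * n))) :=
        Finset.min_le (P.1.mem_part (Finset.mem_univ t))
      have h3 : (s : WithTop (Fin (m * n))) < (t : WithTop (Fin (m * n))) :=
        lt_of_lt_of_le (h1 ▸ hmin) h2
      exact WithTop.coe_lt_coe.mp h3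
    refine ⟨s, hst, ?_⟩
    apply Fin.ext
    show idx P (P.1.part s) = (j : ℕ)
    rw [P.1.part_eq_of_mem hq hsq, hiq]

noncomputable def equivWQ (hm : 1 ≤ m) : W m n ≃ Q m n where
  toFun w := ⟨pw hm w, pw_parts_card hm w⟩
  invFun := wqW hm
  left_inv w := by
    apply Subtype.ext
    funext t
    show wq hm ⟨pw hm w, pw_parts_card hm w⟩ t = w.1 t
    set Pq : Q m n := ⟨pw hm w, pw_parts_card hm w⟩ with hPq
    have hpart : Pq.1.part t = fib w.1 (w.1 t) := by
      apply Pq.1.part_eq_of_mem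
      · exact Finset.mem_image_of_mem _ (Finset.mem_univ _)
      · simp only [fib, Finset.mem_filter, Finset.mem_univ, true_and]
    apply Fin.ext
    show idx Pq (Pq.1.part t) = ((w.1 t : Fin n) : ℕ)
    rw [hpart]
    unfold idx
    have hparts : Pq.1.parts = Finset.univ.image (fib w.1) := rfl
    rw [hparts, Finset.filter_image, Finset.card_image_of_injective _ (fib_injective hm w)]
    have hfc : (Finset.univ.filter fun j => (fib w.1 (w.1 t)).min < (fib w.1 j).min)
        = Finset.univ.filter fun j : Fin n => (j : ℕ) < ((w.1 t : Fin n) : ℕ) := by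
      apply Finset.filter_congr
      intro j _
      simp only [fib_min_lt_iff hm w, Fin.lt_def]
    rw [hfc, card_filter_lt (le_of_lt (w.1 t).isLt)]
  right_inv P := by
    apply Subtype.ext
    apply Finpartition.ext
    show (Finset.univ.image (fib (wqW hm P).1)) = P.1.parts
    apply Finset.eq_of_subset_of_card_le
    · intro p hp
      rw [Finset.mem_image] at hp
      obtain ⟨i, _, rfl⟩ := hp
      obtain ⟨q, hq, hiq⟩ := idx_surj hm P i
      have : fib (wqW hm P).1 i = q := wq_fiber hm P hq hiq
      rw [this]
      exact hq
    · rw [Finset.card_image_of_injective _ (fib_injective hm (wqW hm P)),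
        Finset.card_univ, Fintype.card_fin, parts_card hm P]

end Stmt2


/-- There is a bijection between maximal chains of the stacked lattice `Σ_n C_{m-1}^n`
(for `m ≥ 1`), represented as the subposet of `Fin n → Fin (m+1)` of tuples with
`x (i+1) = 0 → x i = 0`, and partitions of a set with `m·n` elements into blocks
of size exactly `m`. -/
theorem stmt_2 (m n : ℕ) (hm : 1 ≤ m) :
    Nonempty (
      {C : Set {x : Fin n → Fin (m + 1) //
          ∀ (i : ℕ) (h : i + 1 < n), x ⟨i + 1, h⟩ = 0 → x ⟨i, Nat.lt_of_succ_lt h⟩ = 0} //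
        IsMaxChain (· ≤ ·) C}
      ≃ {P : Finpartition (Finset.univ : Finset (Fin (m * n))) //
          ∀ p ∈ P.parts, p.card = m}) := by
  exact ⟨Stmt2.equivAG.trans (Stmt2.equivGW.trans (Stmt2.equivWQ hm))⟩
end

section
/- Let k and n be natural numbers. Consider the subposet S of the product poset (Fin n → Fin (k+2)) (pointwise order) consisting of those tuples x such that for every index i with i+1 < n, if (x(i+1) : ℕ) < k then x(i) ≤ x(i+1). Then there is a bijection between the set of maximal chains of S and the set of words w : Fin ((k+1)·n) → Fin n such that (1) every letter a ∈ Fin n occurs exactly k+1 times in w, and (2) for every prefix of w (i.e., for every t ≤ (k+1)·n, restricting w to positions < t) and all letters i < j in Fin n: if i occurs at least once in the prefix, then the number of occurrences of i in the prefix is greater than or equal to the number of occurrences of j in the prefix. -/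
namespace Stmt5

variable {k n : ℕ}

abbrev Q (k n : ℕ) := {x : Fin n → Fin (k + 2) //
    ∀ (i : ℕ) (h : i + 1 < n), ((x ⟨i + 1, h⟩ : ℕ) < k) →
      x ⟨i, Nat.lt_of_succ_lt h⟩ ≤ x ⟨i + 1, h⟩}

def rk (x : Q k n) : ℕ := ∑ i, (x.1 i : ℕ)

lemma le_iff {x y : Q k n} : x ≤ y ↔ ∀ i, (x.1 i : ℕ) ≤ (y.1 i : ℕ) := by
  constructor
  · intro h i; exact h i
  · intro h i; exact h i

lemma rk_mono {x y : Q k n} (h : x ≤ y) : rk x ≤ rk y :=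
  Finset.sum_le_sum fun i _ => le_iff.1 h i

lemma eq_of_le_of_rk_le {x y : Q k n} (h : x ≤ y) (hr : rk y ≤ rk x) : x = y := by
  have := (Finset.sum_eq_sum_iff_of_le (fun i _ => le_iff.1 h i)).1
    (le_antisymm (rk_mono h) hr)
  ext i
  exact (this i (Finset.mem_univ i)).symm ▸ rfl

lemma rk_strict {x y : Q k n} (h : x < y) : rk x < rk y := by
  rcases lt_or_eq_of_le (rk_mono h.le) with h' | h'
  · exact h'
  · exact absurd (eq_of_le_of_rk_le h.le h'.ge) h.ne

lemma rk_le (x : Q k n) : rk x ≤ (k + 1) * n := by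
  calc rk x ≤ ∑ _i : Fin n, (k + 1) :=
        Finset.sum_le_sum fun i _ => Nat.lt_succ_iff.1 (x.1 i).2
    _ = (k + 1) * n := by simp [Finset.sum_const, Nat.mul_comm]

def qbot : Q k n := ⟨fun _ => 0, fun i h _ => le_refl _⟩

def qtop : Q k n := ⟨fun _ => Fin.last (k + 1), fun i h hk => by
  simp [Fin.last] at hk⟩

lemma qbot_le (x : Q k n) : qbot ≤ x := fun i => Fin.zero_le _

lemma le_qtop (x : Q k n) : x ≤ qtop := fun i => Fin.le_last _

lemma rk_qtop : rk (qtop : Q k n) = (k + 1) * n := by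
  simp [rk, qtop, Fin.last, Finset.sum_const, Nat.mul_comm]

lemma rk_qbot : rk (qbot : Q k n) = 0 := by simp [rk, qbot]

lemma eq_qbot_of_rk {x : Q k n} (h : rk x = 0) : x = qbot :=
  (eq_of_le_of_rk_le (qbot_le x) (by rw [h, rk_qbot])).symm

lemma cond_apply (x : Q k n) {a b : Fin n} (hab : (a : ℕ) + 1 = (b : ℕ))
    (hk : (x.1 b : ℕ) < k) : (x.1 a : ℕ) ≤ (x.1 b : ℕ) := by
  have hb : (a : ℕ) + 1 < n := hab ▸ b.2
  have e1 : (⟨(a : ℕ), Nat.lt_of_succ_lt hb⟩ : Fin n) = a := Fin.ext rfl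
  have e2 : (⟨(a : ℕ) + 1, hb⟩ : Fin n) = b := Fin.ext hab
  have h := x.2 (a : ℕ) hb (by rw [e2]; exact hk)
  rw [e1, e2] at h
  exact h

/-- the step lemma: below y there is an element covering x -/
lemma exists_step {x y : Q k n} (h : x < y) :
    ∃ z : Q k n, x ≤ z ∧ z ≤ y ∧ rk z = rk x + 1 := by
  classical
  have hle : ∀ j, (x.1 j : ℕ) ≤ y.1 j := le_iff.1 h.le
  have hne : (Finset.univ.filter fun i : Fin n => (x.1 i : ℕ) < y.1 i).Nonempty := by
    by_contra hemp
    refine h.ne (Subtype.ext (funext fun j => ?_))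
    rw [Finset.not_nonempty_iff_eq_empty, Finset.filter_eq_empty_iff] at hemp
    have := hemp (Finset.mem_univ j)
    exact Fin.ext (by have := hle j; omega)
  set s := Finset.univ.filter fun i : Fin n => (x.1 i : ℕ) < y.1 i with hs
  set i := s.max' hne with hidef
  have hi : (x.1 i : ℕ) < y.1 i := (Finset.mem_filter.1 (s.max'_mem hne)).2
  have hmax : ∀ j : Fin n, (i : ℕ) < (j : ℕ) → (x.1 j : ℕ) = y.1 j := by
    intro j hj
    by_contra hne'
    have hj2 : (x.1 j : ℕ) < y.1 j := lt_of_le_of_ne (hle j) hne'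
    have h3 : (j : ℕ) ≤ (i : ℕ) := Fin.le_def.1 (s.le_max' j (by simp [hs]; exact Fin.lt_def.2 hj2))
    omega
  have hlt : (x.1 i : ℕ) + 1 < k + 2 := by have := (y.1 i).2; omega
  set zf : Fin n → Fin (k + 2) := fun j => if j = i then ⟨(x.1 i : ℕ) + 1, hlt⟩ else x.1 j
    with hzf
  have hzval : ∀ j, (zf j : ℕ) = (x.1 j : ℕ) + (if j = i then 1 else 0) := by
    intro j
    by_cases hj : j = i <;> simp [hzf, hj]
  have hzcond : ∀ (m : ℕ) (hm : m + 1 < n), ((zf ⟨m + 1, hm⟩ : ℕ) < k) →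
      zf ⟨m, Nat.lt_of_succ_lt hm⟩ ≤ zf ⟨m + 1, hm⟩ := by
    intro m hm hk
    have hab : ((⟨m, Nat.lt_of_succ_lt hm⟩ : Fin n) : ℕ) + 1 = ((⟨m + 1, hm⟩ : Fin n) : ℕ) := rfl
    rw [Fin.le_def, hzval, hzval]
    rw [hzval] at hk
    by_cases hbi : (⟨m + 1, hm⟩ : Fin n) = i
    · have hai : ¬ (⟨m, Nat.lt_of_succ_lt hm⟩ : Fin n) = i := by
        rw [← hbi]; simp [Fin.ext_iff]
      rw [if_pos hbi] at hk
      rw [if_neg hai, if_pos hbi]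
      have hxk : (x.1 (⟨m + 1, hm⟩ : Fin n) : ℕ) < k := by omega
      have h4 := cond_apply x hab hxk
      omega
    · rw [if_neg hbi] at hk
      rw [if_neg hbi]
      by_cases hai : (⟨m, Nat.lt_of_succ_lt hm⟩ : Fin n) = i
      · rw [if_pos hai]
        have hib : (i : ℕ) < ((⟨m + 1, hm⟩ : Fin n) : ℕ) := by
          rw [← hai]; exact Nat.lt_succ_self m
        have hxyb := hmax ⟨m + 1, hm⟩ hib
        have hyk : (y.1 (⟨m + 1, hm⟩ : Fin n) : ℕ) < k := by omega
        have h2 := cond_apply y hab hyk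
        rw [hai] at h2
        have h3 : (x.1 i : ℕ) < y.1 i := hi
        rw [hai]
        omega
      · rw [if_neg hai]
        have h4 := cond_apply x hab (by omega)
        omega
  refine ⟨⟨zf, hzcond⟩, ?_, ?_, ?_⟩
  · intro j
    rw [Fin.le_def]
    show (x.1 j : ℕ) ≤ (zf j : ℕ)
    rw [hzval j]; omega
  · intro j
    rw [Fin.le_def]
    show (zf j : ℕ) ≤ (y.1 j : ℕ)
    rw [hzval j]
    by_cases hj : j = i
    · rw [if_pos hj, hj]; omega
    · rw [if_neg hj]; simpa using hle j
  · show (∑ j, (zf j : ℕ)) = rk x + 1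
    have heq : (∑ j, (zf j : ℕ)) = ∑ j, ((x.1 j : ℕ) + if j = i then 1 else 0) :=
      Finset.sum_congr rfl fun j _ => hzval j
    rw [heq, Finset.sum_add_distrib, Finset.sum_ite_eq' Finset.univ i (fun _ => 1)]
    simp [rk]

section Chain

variable {C : Set (Q k n)} (hC : IsMaxChain (· ≤ ·) C)

include hC

lemma qbot_mem : qbot ∈ C := by
  have h := hC.2 (hC.1.insert (fun b _ _ => Or.inl (qbot_le b))) (Set.subset_insert _ _)
  rw [h]; exact Set.mem_insert _ _

lemma qtop_mem : qtop ∈ C := by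
  have h := hC.2 (hC.1.insert (fun b _ _ => Or.inr (le_qtop b))) (Set.subset_insert _ _)
  rw [h]; exact Set.mem_insert _ _

lemma rank_unique {x y : Q k n} (hx : x ∈ C) (hy : y ∈ C) (hr : rk x = rk y) : x = y := by
  by_contra hne
  rcases hC.1 hx hy hne with h | h
  · exact hne (eq_of_le_of_rk_le h hr.ge)
  · exact hne (eq_of_le_of_rk_le h hr.le).symm

lemma exists_rank (t : ℕ) (ht : t ≤ (k + 1) * n) : ∃ x ∈ C, rk x = t := by
  by_contra hno
  push_neg at hno
  rcases Nat.eq_zero_or_pos t with rfl | ht0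
  · exact hno qbot (qbot_mem hC) rk_qbot
  rcases eq_or_lt_of_le ht with rfl | htN
  · exact hno qtop (qtop_mem hC) rk_qtop
  set A := {a ∈ C | rk a < t} with hA
  set B := {b ∈ C | t < rk b} with hB
  have hCsub : ∀ c ∈ C, c ∈ A ∨ c ∈ B := by
    intro c hc
    rcases Nat.lt_trichotomy (rk c) t with h | h | h
    · exact Or.inl ⟨hc, h⟩
    · exact absurd h (hno c hc)
    · exact Or.inr ⟨hc, h⟩
  obtain ⟨a, haA, hamax⟩ := Set.Finite.exists_maximalFor id A (Set.toFinite A)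
    ⟨qbot, qbot_mem hC, by rw [rk_qbot]; omega⟩
  obtain ⟨b, hbB, hbmin⟩ := Set.Finite.exists_minimalFor id B (Set.toFinite B)
    ⟨qtop, qtop_mem hC, by rw [rk_qtop]; omega⟩
  have hagr : ∀ c ∈ A, c ≤ a := by
    intro c hc
    by_cases hce : c = a
    · exact hce.le
    rcases hC.1 hc.1 haA.1 hce with h | h
    · exact h
    · exact hamax hc h
  have hble : ∀ c ∈ B, b ≤ c := by
    intro c hc
    by_cases hce : c = b
    · exact hce.ge
    rcases hC.1 hbB.1 hc.1 (fun h => hce h.symm) with h | h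
    · exact h
    · exact hbmin hc h
  have hab : a < b := by
    have hne : a ≠ b := fun h => by
      have h1 := haA.2; have h2 := hbB.2; rw [h] at h1; omega
    rcases hC.1 haA.1 hbB.1 hne with h | h
    · exact lt_of_le_of_ne h hne
    · exfalso; have := rk_mono h; have := haA.2; have := hbB.2; omega
  obtain ⟨z, hxz, hzy, hrz⟩ := exists_step hab
  have hzrk : rk z ≤ t := by have := haA.2; omega
  have hznotC : z ∉ C := by
    intro hzC
    rcases hCsub z hzC with h | h
    · have := rk_mono (hagr z h); omega
    · have := h.2; omega
  have hchain : IsChain (· ≤ ·) (insert z C) := by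
    refine hC.1.insert fun c hc _ => ?_
    rcases hCsub c hc with h | h
    · exact Or.inr ((hagr c h).trans hxz)
    · exact Or.inl (hzy.trans (hble c h))
  exact hznotC (by rw [hC.2 hchain (Set.subset_insert _ _)]; exact Set.mem_insert _ _)

noncomputable def elt (t : ℕ) : Q k n :=
  (exists_rank hC (min t ((k + 1) * n)) (min_le_right _ _)).choose

lemma elt_mem (t : ℕ) : elt hC t ∈ C :=
  (exists_rank hC (min t ((k + 1) * n)) (min_le_right _ _)).choose_spec.1

lemma rk_elt (t : ℕ) : rk (elt hC t) = min t ((k + 1) * n) :=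
  (exists_rank hC (min t ((k + 1) * n)) (min_le_right _ _)).choose_spec.2

lemma elt_le {t t' : ℕ} (h : t ≤ t') : elt hC t ≤ elt hC t' := by
  by_cases hne : elt hC t = elt hC t'
  · exact hne.le
  rcases hC.1 (elt_mem hC t) (elt_mem hC t') hne with h' | h'
  · exact h'
  · refine (eq_of_le_of_rk_le h' ?_).ge
    rw [rk_elt, rk_elt]
    exact min_le_min h (le_refl _)

lemma elt_eq_of_mem {x : Q k n} (hx : x ∈ C) : x = elt hC (rk x) := by
  refine rank_unique hC hx (elt_mem hC _) ?_
  rw [rk_elt]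
  exact (Nat.min_eq_left (rk_le x)).symm

end Chain

lemma exists_diff {x y : Q k n} (hle : x ≤ y) (hr : rk y = rk x + 1) :
    ∃ i : Fin n, (y.1 i : ℕ) = (x.1 i : ℕ) + 1 ∧ ∀ j, j ≠ i → y.1 j = x.1 j := by
  classical
  have hle' := le_iff.1 hle
  set d : Fin n → ℕ := fun j => (y.1 j : ℕ) - (x.1 j : ℕ) with hd
  have hsum : ∑ j, d j = 1 := by
    have h1 : ∑ j, ((x.1 j : ℕ) + d j) = ∑ j, (y.1 j : ℕ) :=
      Finset.sum_congr rfl fun j _ => by have := hle' j; simp [hd]; omega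
    rw [Finset.sum_add_distrib] at h1
    have h2 : rk y = rk x + 1 := hr
    simp only [rk] at h2
    omega
  obtain ⟨i, hi⟩ : ∃ i, d i ≠ 0 := by
    by_contra hall
    push_neg at hall
    rw [Finset.sum_eq_zero (fun j _ => hall j)] at hsum
    omega
  have h2 := Finset.add_sum_erase Finset.univ d (Finset.mem_univ i)
  have hdi : d i = 1 := by omega
  have hrest : ∑ j ∈ Finset.univ.erase i, d j = 0 := by omega
  refine ⟨i, by have := hle' i; simp [hd] at hdi; omega, fun j hj => ?_⟩
  have hz : d j = 0 := by
    have := (Finset.sum_eq_zero_iff).1 hrest j (by simp [hj])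
    exact this
  refine Fin.ext ?_
  have := hle' j
  simp [hd] at hz
  omega

section Count

open Finset
variable {N : ℕ}

/-- number of occurrences of `i` among the first `t` values of `u` -/
def cnt (u : ℕ → Fin n) (t : ℕ) (i : Fin n) : ℕ :=
  ((Finset.range t).filter fun p => u p = i).card

/-- number of occurrences of `i` in the length-`t` prefix of the word `w` -/
def swc (w : Fin N → Fin n) (t : ℕ) (i : Fin n) : ℕ :=
  (Finset.univ.filter fun p : Fin N => (p : ℕ) < t ∧ w p = i).card

lemma cnt_zero (u : ℕ → Fin n) (i : Fin n) : cnt u 0 i = 0 := by simp [cnt]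

lemma cnt_succ (u : ℕ → Fin n) (t : ℕ) (i : Fin n) :
    cnt u (t + 1) i = cnt u t i + if u t = i then 1 else 0 := by
  unfold cnt
  rw [Finset.range_add_one, Finset.filter_insert]
  by_cases h : u t = i
  · rw [if_pos h, if_pos h, Finset.card_insert_of_notMem (fun hmem => by simp at hmem)]
  · rw [if_neg h, if_neg h]
    omega

lemma cnt_mono (u : ℕ → Fin n) {t t' : ℕ} (h : t ≤ t') (i : Fin n) :
    cnt u t i ≤ cnt u t' i :=
  Finset.card_le_card (Finset.filter_subset_filter _ (Finset.range_subset_range.2 h))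

lemma cnt_congr {u u' : ℕ → Fin n} {t : ℕ} (h : ∀ q < t, u q = u' q) (i : Fin n) :
    cnt u t i = cnt u' t i := by
  unfold cnt
  congr 1
  apply Finset.filter_congr
  intro q hq
  rw [h q (Finset.mem_range.1 hq)]

lemma cnt_interval (u : ℕ → Fin n) {t t' : ℕ} (h : t ≤ t') (i : Fin n) :
    cnt u t' i = cnt u t i + ((Finset.Ico t t').filter fun p => u p = i).card := by
  rw [cnt, cnt, Finset.range_eq_Ico,
    ← Finset.Ico_union_Ico_eq_Ico (Nat.zero_le t) h, Finset.filter_union,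
    Finset.card_union_of_disjoint
      (Finset.disjoint_filter_filter (Finset.Ico_disjoint_Ico_consecutive 0 t t')), Finset.range_eq_Ico]

lemma swc_mono (w : Fin N → Fin n) {t t' : ℕ} (h : t ≤ t') (i : Fin n) :
    swc w t i ≤ swc w t' i := by
  apply Finset.card_le_card
  intro p hp
  simp only [Finset.mem_filter, Finset.mem_univ, true_and] at hp ⊢
  exact ⟨by omega, hp.2⟩

lemma swc_succ (w : Fin N → Fin n) {m : ℕ} (hm : m < N) (i : Fin n) :
    swc w (m + 1) i = swc w m i + if w ⟨m, hm⟩ = i then 1 else 0 := by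
  classical
  unfold swc
  have key : (Finset.univ.filter fun p : Fin N => (p : ℕ) < m + 1 ∧ w p = i)
      = (Finset.univ.filter fun p : Fin N => (p : ℕ) < m ∧ w p = i) ∪
        (Finset.univ.filter fun p : Fin N => (p : ℕ) = m ∧ w p = i) := by
    ext p
    simp only [Finset.mem_filter, Finset.mem_union, Finset.mem_univ, true_and]
    constructor
    · rintro ⟨h1, h2⟩
      rcases Nat.lt_or_ge (p : ℕ) m with h' | h'
      · exact Or.inl ⟨h', h2⟩
      · exact Or.inr ⟨by omega, h2⟩
    · rintro (⟨h1, h2⟩ | ⟨h1, h2⟩) <;> exact ⟨by omega, h2⟩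
  have hdisj : Disjoint (Finset.univ.filter fun p : Fin N => (p : ℕ) < m ∧ w p = i)
      (Finset.univ.filter fun p : Fin N => (p : ℕ) = m ∧ w p = i) := by
    rw [Finset.disjoint_left]
    intro p h1 h2
    simp only [Finset.mem_filter, Finset.mem_univ, true_and] at h1 h2
    omega
  rw [key, Finset.card_union_of_disjoint hdisj]
  congr 1
  have heq : ∀ p : Fin N, ((p : ℕ) = m ∧ w p = i) ↔ (w ⟨m, hm⟩ = i ∧ p = ⟨m, hm⟩) := by
    intro p
    constructor
    · rintro ⟨h1, h2⟩
      have hp : p = ⟨m, hm⟩ := Fin.ext h1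
      subst hp
      exact ⟨h2, rfl⟩
    · rintro ⟨h1, rfl⟩
      exact ⟨rfl, h1⟩
  rw [Finset.filter_congr (fun p _ => heq p)]
  by_cases h : w ⟨m, hm⟩ = i <;> simp [h, Finset.filter_eq']

lemma sum_swc (w : Fin N → Fin n) (t : ℕ) : ∑ i, swc w t i = min t N := by
  unfold swc
  have h1 : ∀ i : Fin n, (Finset.univ.filter fun p : Fin N => (p : ℕ) < t ∧ w p = i)
      = (Finset.univ.filter fun p : Fin N => (p : ℕ) < t).filter fun p => w p = i := by
    intro i; rw [Finset.filter_filter]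
  rw [Finset.sum_congr rfl fun i _ => congrArg Finset.card (h1 i)]
  have h2 := Finset.card_eq_sum_card_fiberwise
    (s := Finset.univ.filter fun p : Fin N => (p : ℕ) < t) (t := Finset.univ) (f := w)
    (fun p _ => Finset.mem_univ (w p))
  rw [← h2]
  have h3 : (Finset.univ.filter fun p : Fin N => (p : ℕ) < t).card
      = (Finset.range (min t N)).card := by
    refine Finset.card_bij' (fun p _ => (p : ℕ))
      (fun q hq => ⟨q, by simp only [Finset.mem_range] at hq; omega⟩)
      (fun p hp => ?_) (fun q hq => ?_) (fun p hp => Fin.ext rfl) (fun q hq => rfl)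
    · simp only [Finset.mem_filter, Finset.mem_univ, true_and] at hp
      simp only [Finset.mem_range]
      have := p.2
      omega
    · simp only [Finset.mem_range] at hq
      simp only [Finset.mem_filter, Finset.mem_univ, true_and]
      show q < t
      omega
  rw [h3, Finset.card_range]

/-- reversed word, as a function on `ℕ` -/
def urev (hn : 0 < n) (w : Fin N → Fin n) (q : ℕ) : Fin n :=
  if h : q < N then w ⟨N - 1 - q, by omega⟩ else ⟨0, hn⟩

lemma swc_add_cnt (hn : 0 < n) (w : Fin N → Fin n) {t : ℕ} (ht : t ≤ N) (i : Fin n) :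
    swc w t i + cnt (urev hn w) (N - t) i = cnt (urev hn w) N i := by
  rw [cnt_interval (urev hn w) (Nat.sub_le N t) i]
  have : swc w t i = ((Finset.Ico (N - t) N).filter fun q => urev hn w q = i).card := by
    unfold swc
    refine Finset.card_bij' (fun (p : Fin N) _ => N - 1 - (p : ℕ))
      (fun (q : ℕ) hq =>
        (⟨N - 1 - q, by simp only [Finset.mem_filter, Finset.mem_Ico] at hq; omega⟩ : Fin N))
      (fun p hp => ?_) (fun q hq => ?_) (fun p hp => ?_) (fun q hq => ?_)
    · simp only [Finset.mem_filter, Finset.mem_univ, true_and] at hp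
      simp only [Finset.mem_filter, Finset.mem_Ico]
      have hpN := p.2
      refine ⟨⟨by omega, by omega⟩, ?_⟩
      rw [urev, dif_pos (by omega : N - 1 - (p : ℕ) < N)]
      have he : (⟨N - 1 - (N - 1 - (p : ℕ)), by omega⟩ : Fin N) = p := Fin.ext (by
        show N - 1 - (N - 1 - (p : ℕ)) = (p : ℕ); omega)
      rw [he]
      exact hp.2
    · simp only [Finset.mem_filter, Finset.mem_Ico] at hq
      simp only [Finset.mem_filter, Finset.mem_univ, true_and]
      obtain ⟨⟨hq1, hq2⟩, hq3⟩ := hq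
      refine ⟨by show N - 1 - q < t; omega, ?_⟩
      rw [urev, dif_pos hq2] at hq3
      exact hq3
    · have hpN := p.2
      exact Fin.ext (by show N - 1 - (N - 1 - (p : ℕ)) = (p : ℕ); omega)
    · simp only [Finset.mem_filter, Finset.mem_Ico] at hq
      show N - 1 - (N - 1 - q) = q
      omega
  omega

end Count

lemma pair_mono (x : Q k n) {i j : Fin n} (hij : i < j) (hik : (x.1 i : ℕ) ≤ k) :
    (x.1 i : ℕ) ≤ (x.1 j : ℕ) := by
  have key : ∀ d : ℕ, ∀ h : (i : ℕ) + d < n, (x.1 i : ℕ) ≤ (x.1 ⟨(i : ℕ) + d, h⟩ : ℕ) := by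
    intro d
    induction d with
    | zero =>
      intro h
      have he : (⟨(i : ℕ) + 0, h⟩ : Fin n) = i := Fin.ext (show (i : ℕ) + 0 = (i : ℕ) from rfl)
      exact le_of_eq (by rw [he])
    | succ d ih =>
      intro h
      have hd : (i : ℕ) + d < n := by omega
      have ihd := ih hd
      by_cases hk : (x.1 ⟨(i : ℕ) + (d + 1), h⟩ : ℕ) < k
      · have := cond_apply x (a := ⟨(i : ℕ) + d, hd⟩) (b := ⟨(i : ℕ) + (d + 1), h⟩)
          (show (i : ℕ) + d + 1 = (i : ℕ) + (d + 1) by omega) hk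
        omega
      · omega
  have hij' : (i : ℕ) < (j : ℕ) := hij
  have h' : (i : ℕ) + ((j : ℕ) - (i : ℕ)) < n := by have := j.2; omega
  have hj := key _ h'
  have he : (⟨(i : ℕ) + ((j : ℕ) - (i : ℕ)), h'⟩ : Fin n) = j := Fin.ext (by
    show (i : ℕ) + ((j : ℕ) - (i : ℕ)) = (j : ℕ); omega)
  rwa [he] at hj

section Word

variable (hn : 0 < n) {C : Set (Q k n)} (hC : IsMaxChain (· ≤ ·) C)

/-- the coordinate incremented at step `t` of the chain -/
noncomputable def uword (t : ℕ) : Fin n :=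
  if h : t + 1 ≤ (k + 1) * n then
    (exists_diff (elt_le hC (Nat.le_succ t)) (by rw [rk_elt, rk_elt]; omega)).choose
  else ⟨0, hn⟩

lemma uword_spec (t : ℕ) (h : t + 1 ≤ (k + 1) * n) :
    ((elt hC (t + 1)).1 (uword hn hC t) : ℕ) = ((elt hC t).1 (uword hn hC t) : ℕ) + 1 ∧
    ∀ j, j ≠ uword hn hC t → (elt hC (t + 1)).1 j = (elt hC t).1 j := by
  unfold uword
  rw [dif_pos h]
  exact (exists_diff (elt_le hC (Nat.le_succ t)) (by rw [rk_elt, rk_elt]; omega)).choose_spec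

lemma elt_apply : ∀ t, t ≤ (k + 1) * n → ∀ i, ((elt hC t).1 i : ℕ) = cnt (uword hn hC) t i := by
  intro t
  induction t with
  | zero =>
    intro _ i
    have h0 : elt hC 0 = qbot := eq_qbot_of_rk (by rw [rk_elt]; simp)
    rw [h0, cnt_zero]
    rfl
  | succ t ih =>
    intro ht i
    have ht' : t ≤ (k + 1) * n := by omega
    obtain ⟨h1, h2⟩ := uword_spec hn hC t ht
    rw [cnt_succ]
    by_cases hi : uword hn hC t = i
    · rw [if_pos hi, ← ih ht' i, ← hi]
      omega
    · rw [if_neg hi, ← ih ht' i]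
      have h3 := h2 i (fun he => hi he.symm)
      rw [h3]
      omega

lemma elt_top : elt hC ((k + 1) * n) = qtop :=
  rank_unique hC (elt_mem hC _) (qtop_mem hC) (by rw [rk_elt, rk_qtop]; simp)

lemma cnt_uword_total (i : Fin n) : cnt (uword hn hC) ((k + 1) * n) i = k + 1 := by
  rw [← elt_apply hn hC _ le_rfl i, elt_top]
  simp [qtop, Fin.last]

/-- the word associated to a maximal chain -/
noncomputable def wordOf (p : Fin ((k + 1) * n)) : Fin n :=
  uword hn hC ((k + 1) * n - 1 - (p : ℕ))

lemma urev_wordOf : ∀ q < (k + 1) * n, urev hn (wordOf hn hC) q = uword hn hC q := by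
  intro q hq
  rw [urev, dif_pos hq, wordOf]
  congr 1
  show (k + 1) * n - 1 - ((k + 1) * n - 1 - q) = q
  omega

lemma swc_wordOf {t : ℕ} (ht : t ≤ (k + 1) * n) (i : Fin n) :
    swc (wordOf hn hC) t i + ((elt hC ((k + 1) * n - t)).1 i : ℕ) = k + 1 := by
  have h := swc_add_cnt hn (wordOf hn hC) ht i
  have e1 : cnt (urev hn (wordOf hn hC)) ((k + 1) * n - t) i
      = cnt (uword hn hC) ((k + 1) * n - t) i :=
    cnt_congr (fun q hq => urev_wordOf hn hC q (by omega)) i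
  have e2 : cnt (urev hn (wordOf hn hC)) ((k + 1) * n) i
      = cnt (uword hn hC) ((k + 1) * n) i :=
    cnt_congr (fun q hq => urev_wordOf hn hC q hq) i
  rw [e1, e2, cnt_uword_total hn hC i,
    ← elt_apply hn hC _ (by omega) i] at h
  exact h

lemma wordOf_cond1 (a : Fin n) :
    (Finset.univ.filter fun p => wordOf hn hC p = a).card = k + 1 := by
  have h := swc_wordOf hn hC (le_refl ((k + 1) * n)) a
  rw [Nat.sub_self] at h
  have h0 : elt hC 0 = qbot := eq_qbot_of_rk (by rw [rk_elt]; simp)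
  rw [h0] at h
  have hq : ((qbot : Q k n).1 a : ℕ) = 0 := rfl
  rw [hq] at h
  have he : (Finset.univ.filter fun p => wordOf hn hC p = a)
      = (Finset.univ.filter fun p : Fin ((k + 1) * n) =>
          (p : ℕ) < (k + 1) * n ∧ wordOf hn hC p = a) := by
    apply Finset.filter_congr
    intro p _
    simp [p.2]
  rw [he]
  have h' : swc (wordOf hn hC) ((k + 1) * n) a
      = (Finset.univ.filter fun p : Fin ((k + 1) * n) =>
          (p : ℕ) < (k + 1) * n ∧ wordOf hn hC p = a).card := rfl
  omega

lemma wordOf_cond2 : ∀ t : ℕ, t ≤ (k + 1) * n → ∀ i j : Fin n, i < j →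
    (∃ p : Fin ((k + 1) * n), (p : ℕ) < t ∧ wordOf hn hC p = i) →
    (Finset.univ.filter fun p : Fin ((k + 1) * n) =>
        (p : ℕ) < t ∧ wordOf hn hC p = j).card ≤
    (Finset.univ.filter fun p : Fin ((k + 1) * n) =>
        (p : ℕ) < t ∧ wordOf hn hC p = i).card := by
  intro t ht i j hij ⟨p, hp1, hp2⟩
  have hsi := swc_wordOf hn hC ht i
  have hsj := swc_wordOf hn hC ht j
  have hpos : 0 < swc (wordOf hn hC) t i := by
    rw [swc, Finset.card_pos]
    exact ⟨p, by simp [hp1, hp2]⟩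
  have hik : ((elt hC ((k + 1) * n - t)).1 i : ℕ) ≤ k := by omega
  have hmono := pair_mono (elt hC ((k + 1) * n - t)) hij hik
  show swc (wordOf hn hC) t j ≤ swc (wordOf hn hC) t i
  omega

end Word

section Build

variable {N : ℕ} (w : Fin ((k + 1) * n) → Fin n)
  (hw1 : ∀ a : Fin n, (Finset.univ.filter fun p => w p = a).card = k + 1)
  (hw2 : ∀ t : ℕ, t ≤ (k + 1) * n → ∀ i j : Fin n, i < j →
    (∃ p : Fin ((k + 1) * n), (p : ℕ) < t ∧ w p = i) →
    (Finset.univ.filter fun p : Fin ((k + 1) * n) => (p : ℕ) < t ∧ w p = j).card ≤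
    (Finset.univ.filter fun p : Fin ((k + 1) * n) => (p : ℕ) < t ∧ w p = i).card)

lemma swc_interval' {M : ℕ} (v : Fin M → Fin n) {t t' : ℕ} (h : t ≤ t') (i : Fin n) :
    swc v t' i = swc v t i +
      (Finset.univ.filter fun p : Fin M => t ≤ (p : ℕ) ∧ (p : ℕ) < t' ∧ v p = i).card := by
  unfold swc
  have key : (Finset.univ.filter fun p : Fin M => (p : ℕ) < t' ∧ v p = i)
      = (Finset.univ.filter fun p : Fin M => (p : ℕ) < t ∧ v p = i) ∪
        (Finset.univ.filter fun p : Fin M => t ≤ (p : ℕ) ∧ (p : ℕ) < t' ∧ v p = i) := by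
    ext p
    simp only [Finset.mem_filter, Finset.mem_union, Finset.mem_univ, true_and]
    constructor
    · rintro ⟨h1, h2⟩
      rcases Nat.lt_or_ge (p : ℕ) t with h' | h'
      · exact Or.inl ⟨h', h2⟩
      · exact Or.inr ⟨h', h1, h2⟩
    · rintro (⟨h1, h2⟩ | ⟨h1, h2, h3⟩)
      · exact ⟨by omega, h2⟩
      · exact ⟨h2, h3⟩
  rw [key, Finset.card_union_of_disjoint]
  rw [Finset.disjoint_left]
  intro p h1 h2
  simp only [Finset.mem_filter, Finset.mem_univ, true_and] at h1 h2
  omega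

include hw1 in
lemma swc_le_total (t : ℕ) (i : Fin n) : swc w t i ≤ k + 1 := by
  have hsub : (Finset.univ.filter fun p : Fin ((k + 1) * n) => (p : ℕ) < t ∧ w p = i)
      ⊆ Finset.univ.filter fun p => w p = i := by
    intro p hp
    simp only [Finset.mem_filter, Finset.mem_univ, true_and] at hp ⊢
    exact hp.2
  exact le_trans (Finset.card_le_card hsub) (le_of_eq (hw1 i))

include hw1 in
lemma swc_total (i : Fin n) : swc w ((k + 1) * n) i = k + 1 := by
  have he : swc w ((k + 1) * n) i = (Finset.univ.filter fun p => w p = i).card := by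
    unfold swc
    congr 1
    apply Finset.filter_congr
    intro p _
    simp [p.2]
  rw [he, hw1 i]

include hw1 hw2 in
lemma swc_ballot {t : ℕ} (ht : t ≤ (k + 1) * n) {a b : Fin n} (hab : a < b)
    (h2 : 2 ≤ swc w t b) : swc w t b ≤ swc w t a := by
  rcases Nat.eq_zero_or_pos (swc w t a) with hz | hpos
  · exfalso
    have hne : (Finset.univ.filter fun p : Fin ((k + 1) * n) =>
        t ≤ (p : ℕ) ∧ (p : ℕ) < (k + 1) * n ∧ w p = a).Nonempty := by
      rw [← Finset.card_pos]
      have hint := swc_interval' w ht a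
      have htot := swc_total w hw1 a
      omega
    set F := Finset.univ.filter fun p : Fin ((k + 1) * n) =>
        t ≤ (p : ℕ) ∧ (p : ℕ) < (k + 1) * n ∧ w p = a with hF
    set p₀ := F.min' hne with hp₀
    obtain ⟨-, hp₀t, hp₀N, hp₀a⟩ := Finset.mem_filter.1 (F.min'_mem hne)
    have hone : swc w ((p₀ : ℕ) + 1) a = 1 := by
      rw [swc_interval' w (show t ≤ (p₀ : ℕ) + 1 by omega) a, hz]
      have hsingle : (Finset.univ.filter fun p : Fin ((k + 1) * n) =>
          t ≤ (p : ℕ) ∧ (p : ℕ) < (p₀ : ℕ) + 1 ∧ w p = a) = {p₀} := by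
        ext p
        simp only [Finset.mem_filter, Finset.mem_univ, true_and, Finset.mem_singleton]
        constructor
        · rintro ⟨h1, h2, h3⟩
          have hmem : p ∈ F := Finset.mem_filter.2 ⟨Finset.mem_univ p, h1, p.2, h3⟩
          have := F.min'_le p hmem
          have hle : (p₀ : ℕ) ≤ (p : ℕ) := this
          exact Fin.ext (by omega)
        · rintro rfl
          exact ⟨hp₀t, by omega, hp₀a⟩
      rw [hsingle]
      simp
    have hwb : 2 ≤ swc w ((p₀ : ℕ) + 1) b :=
      le_trans h2 (swc_mono w (by omega) b)
    have happ := hw2 ((p₀ : ℕ) + 1) (by omega) a b hab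
      ⟨p₀, by omega, hp₀a⟩
    have e1 : swc w ((p₀ : ℕ) + 1) b = (Finset.univ.filter
        fun p : Fin ((k + 1) * n) => (p : ℕ) < (p₀ : ℕ) + 1 ∧ w p = b).card := rfl
    have e2 : swc w ((p₀ : ℕ) + 1) a = (Finset.univ.filter
        fun p : Fin ((k + 1) * n) => (p : ℕ) < (p₀ : ℕ) + 1 ∧ w p = a).card := rfl
    omega
  · obtain ⟨p, hp⟩ := Finset.card_pos.1 hpos
    rw [Finset.mem_filter] at hp
    have happ := hw2 t ht a b hab ⟨p, hp.2⟩
    have e1 : swc w t b = (Finset.univ.filter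
        fun p : Fin ((k + 1) * n) => (p : ℕ) < t ∧ w p = b).card := rfl
    have e2 : swc w t a = (Finset.univ.filter
        fun p : Fin ((k + 1) * n) => (p : ℕ) < t ∧ w p = a).card := rfl
    omega

/-- the element of the chain built from a word -/
def mkElt (m : ℕ) : Q k n :=
  ⟨fun i => ⟨k + 1 - swc w ((k + 1) * n - min m ((k + 1) * n)) i, by omega⟩, by
    intro mm hm hb
    set t := (k + 1) * n - min m ((k + 1) * n) with htdef
    have ht : t ≤ (k + 1) * n := by omega
    have hab : (⟨mm, Nat.lt_of_succ_lt hm⟩ : Fin n) < (⟨mm + 1, hm⟩ : Fin n) := by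
      rw [Fin.lt_def]; exact Nat.lt_succ_self mm
    have hbb := swc_le_total w hw1 t (⟨mm + 1, hm⟩ : Fin n)
    have haa := swc_le_total w hw1 t (⟨mm, Nat.lt_of_succ_lt hm⟩ : Fin n)
    have hb' : (2 : ℕ) ≤ swc w t (⟨mm + 1, hm⟩ : Fin n) := by
      have : ((⟨k + 1 - swc w t (⟨mm + 1, hm⟩ : Fin n), by omega⟩ : Fin (k + 2)) : ℕ) < k := hb
      simp only at this
      omega
    have hball := swc_ballot w hw1 hw2 ht hab hb'
    rw [Fin.le_def]
    show k + 1 - swc w t _ ≤ k + 1 - swc w t _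
    omega⟩

lemma mkElt_apply (m : ℕ) (i : Fin n) :
    ((mkElt w hw1 hw2 m).1 i : ℕ) = k + 1 - swc w ((k + 1) * n - min m ((k + 1) * n)) i := rfl

lemma rk_mkElt (m : ℕ) : rk (mkElt w hw1 hw2 m) = min m ((k + 1) * n) := by
  unfold rk
  have hsum : ∑ i, ((mkElt w hw1 hw2 m).1 i : ℕ) + ∑ i,
      swc w ((k + 1) * n - min m ((k + 1) * n)) i = ∑ _i : Fin n, (k + 1) := by
    rw [← Finset.sum_add_distrib]
    apply Finset.sum_congr rfl
    intro i _
    rw [mkElt_apply]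
    have := swc_le_total w hw1 ((k + 1) * n - min m ((k + 1) * n)) i
    omega
  rw [sum_swc] at hsum
  simp only [Finset.sum_const, Finset.card_univ, Fintype.card_fin, smul_eq_mul] at hsum
  rw [Nat.mul_comm n (k + 1)] at hsum
  omega

lemma mkElt_mono {m m' : ℕ} (h : m ≤ m') : mkElt w hw1 hw2 m ≤ mkElt w hw1 hw2 m' := by
  intro i
  rw [Fin.le_def, mkElt_apply, mkElt_apply]
  have hmono := swc_mono w (show (k + 1) * n - min m' ((k + 1) * n)
      ≤ (k + 1) * n - min m ((k + 1) * n) by omega) i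
  omega

lemma mkElt_min (m : ℕ) : mkElt w hw1 hw2 m = mkElt w hw1 hw2 (min m ((k + 1) * n)) := by
  apply Subtype.ext
  funext i
  apply Fin.ext
  rw [mkElt_apply, mkElt_apply]
  congr 2
  omega

lemma mkChain_max : IsMaxChain (· ≤ ·) (Set.range (mkElt w hw1 hw2)) := by
  constructor
  · rintro x ⟨m, rfl⟩ y ⟨m', rfl⟩ hne
    rcases le_total m m' with h | h
    · exact Or.inl (mkElt_mono w hw1 hw2 h)
    · exact Or.inr (mkElt_mono w hw1 hw2 h)
  · intro s hs hsub
    refine Set.Subset.antisymm hsub ?_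
    intro y hy
    have hx : mkElt w hw1 hw2 (rk y) ∈ s := hsub ⟨rk y, rfl⟩
    have hrk : rk (mkElt w hw1 hw2 (rk y)) = rk y := by
      rw [rk_mkElt]
      exact Nat.min_eq_left (rk_le y)
    by_cases he : y = mkElt w hw1 hw2 (rk y)
    · rw [he]; exact ⟨rk y, rfl⟩
    rcases hs hy hx he with h | h
    · rw [eq_of_le_of_rk_le h (by omega)]; exact ⟨rk y, rfl⟩
    · rw [← eq_of_le_of_rk_le h (by omega)]; exact ⟨rk y, rfl⟩

end Build

section Round

variable (hn : 0 < n) (w : Fin ((k + 1) * n) → Fin n)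
  (hw1 : ∀ a : Fin n, (Finset.univ.filter fun p => w p = a).card = k + 1)
  (hw2 : ∀ t : ℕ, t ≤ (k + 1) * n → ∀ i j : Fin n, i < j →
    (∃ p : Fin ((k + 1) * n), (p : ℕ) < t ∧ w p = i) →
    (Finset.univ.filter fun p : Fin ((k + 1) * n) => (p : ℕ) < t ∧ w p = j).card ≤
    (Finset.univ.filter fun p : Fin ((k + 1) * n) => (p : ℕ) < t ∧ w p = i).card)

lemma mkElt_apply_le {m : ℕ} (hm : m ≤ (k + 1) * n) (i : Fin n) :
    ((mkElt w hw1 hw2 m).1 i : ℕ) = k + 1 - swc w ((k + 1) * n - m) i := by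
  rw [mkElt_apply, Nat.min_eq_left hm]

lemma uword_mkChain {t : ℕ} (h : t + 1 ≤ (k + 1) * n) :
    uword hn (mkChain_max w hw1 hw2) t = w ⟨(k + 1) * n - (t + 1), by omega⟩ := by
  obtain ⟨h1, -⟩ := uword_spec hn (mkChain_max w hw1 hw2) t h
  set u₀ := uword hn (mkChain_max w hw1 hw2) t with hu₀
  have e1 : elt (mkChain_max w hw1 hw2) (t + 1) = mkElt w hw1 hw2 (t + 1) :=
    rank_unique (mkChain_max w hw1 hw2) (elt_mem _ _) ⟨t + 1, rfl⟩
      (by rw [rk_elt, rk_mkElt])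
  have e2 : elt (mkChain_max w hw1 hw2) t = mkElt w hw1 hw2 t :=
    rank_unique (mkChain_max w hw1 hw2) (elt_mem _ _) ⟨t, rfl⟩
      (by rw [rk_elt, rk_mkElt])
  rw [e1, e2, mkElt_apply_le w hw1 hw2 h u₀,
    mkElt_apply_le w hw1 hw2 (by omega) u₀] at h1
  have hq : (k + 1) * n - t = ((k + 1) * n - (t + 1)) + 1 := by omega
  rw [hq, swc_succ w (show (k + 1) * n - (t + 1) < (k + 1) * n by omega) u₀] at h1
  have hb := swc_le_total w hw1 ((k + 1) * n - (t + 1)) u₀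
  have hb2 := swc_le_total w hw1 (((k + 1) * n - (t + 1)) + 1) u₀
  by_cases hwq : w ⟨(k + 1) * n - (t + 1), by omega⟩ = u₀
  · exact hwq.symm
  · exfalso
    rw [if_neg hwq] at h1
    omega

lemma wordOf_mkChain (p : Fin ((k + 1) * n)) :
    wordOf hn (mkChain_max w hw1 hw2) p = w p := by
  have hp := p.2
  rw [wordOf, uword_mkChain hn w hw1 hw2
    (t := (k + 1) * n - 1 - (p : ℕ)) (by omega)]
  congr 1
  apply Fin.ext
  show (k + 1) * n - ((k + 1) * n - 1 - (p : ℕ) + 1) = (p : ℕ)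
  omega

end Round

lemma range_mkElt_wordOf (hn : 0 < n) {C : Set (Q k n)} (hC : IsMaxChain (· ≤ ·) C) :
    Set.range (mkElt (wordOf hn hC) (wordOf_cond1 hn hC) (wordOf_cond2 hn hC)) = C := by
  have key : ∀ m, mkElt (wordOf hn hC) (wordOf_cond1 hn hC) (wordOf_cond2 hn hC) m
      = elt hC m := by
    intro m
    apply Subtype.ext
    funext i
    apply Fin.ext
    rw [mkElt_apply]
    have ht : (k + 1) * n - min m ((k + 1) * n) ≤ (k + 1) * n := by omega
    have hs := swc_wordOf hn hC ht i
    have harg : (k + 1) * n - ((k + 1) * n - min m ((k + 1) * n)) = min m ((k + 1) * n) := by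
      omega
    rw [harg] at hs
    have hem : elt hC (min m ((k + 1) * n)) = elt hC m :=
      rank_unique hC (elt_mem _ _) (elt_mem _ _) (by rw [rk_elt, rk_elt]; omega)
    rw [← hem]
    omega
  ext y
  constructor
  · rintro ⟨m, rfl⟩
    rw [key m]
    exact elt_mem hC m
  · intro hy
    exact ⟨rk y, by rw [key (rk y)]; exact (elt_eq_of_mem hC hy).symm⟩

end Stmt5



/-- Maximal chains of the subposet of `Fin n → Fin (k+2)` defined by condition (∗)
(`(x (i+1) : ℕ) < k → x i ≤ x (i+1)`), i.e. of the iterated stacking `Σ^k_n C^n_1`,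
are in bijection with words `w : Fin ((k+1)·n) → Fin n` in which every letter occurs
exactly `k+1` times and, in every prefix, any letter that occurs does so at least as
often as every later letter. -/
theorem stmt_5 (k n : ℕ) :
    Nonempty (
      {C : Set {x : Fin n → Fin (k + 2) //
          ∀ (i : ℕ) (h : i + 1 < n), ((x ⟨i + 1, h⟩ : ℕ) < k) →
            x ⟨i, Nat.lt_of_succ_lt h⟩ ≤ x ⟨i + 1, h⟩} // IsMaxChain (· ≤ ·) C}
      ≃
      {w : Fin ((k + 1) * n) → Fin n //
        (∀ a : Fin n, (Finset.univ.filter fun p => w p = a).card = k + 1) ∧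
        (∀ t : ℕ, t ≤ (k + 1) * n → ∀ i j : Fin n, i < j →
          (∃ p : Fin ((k + 1) * n), (p : ℕ) < t ∧ w p = i) →
          (Finset.univ.filter fun p : Fin ((k + 1) * n) => (p : ℕ) < t ∧ w p = j).card ≤
          (Finset.univ.filter fun p : Fin ((k + 1) * n) => (p : ℕ) < t ∧ w p = i).card)}) := by
  rcases Nat.eq_zero_or_pos n with rfl | hn
  · -- degenerate case n = 0
    have hsub : ∀ x y : Stmt5.Q k 0, x = y := fun x y =>
      Subtype.ext (funext fun i => i.elim0)
    have hchain : ∀ s : Set (Stmt5.Q k 0), IsChain (· ≤ ·) s :=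
      fun s x _ y _ hne => absurd (hsub x y) hne
    have hmax : IsMaxChain (· ≤ ·) (Set.univ : Set (Stmt5.Q k 0)) :=
      ⟨hchain _, fun s _ hsubset => (Set.univ_subset_iff.1 hsubset).symm⟩
    refine ⟨⟨fun _ => ⟨fun p => (Fin.cast (Nat.mul_zero (k + 1)) p).elim0,
        fun a => a.elim0, fun t _ i => i.elim0⟩,
      fun _ => ⟨Set.univ, hmax⟩, ?_, ?_⟩⟩
    · intro C
      exact Subtype.ext (C.2.2 (hchain _) (Set.subset_univ _)).symm
    · intro W
      exact Subtype.ext (funext fun p => (Fin.cast (Nat.mul_zero (k + 1)) p).elim0)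
  · exact ⟨{
      toFun := fun C => ⟨Stmt5.wordOf hn C.2, Stmt5.wordOf_cond1 hn C.2,
        Stmt5.wordOf_cond2 hn C.2⟩
      invFun := fun W => ⟨Set.range (Stmt5.mkElt W.1 W.2.1 W.2.2),
        Stmt5.mkChain_max W.1 W.2.1 W.2.2⟩
      left_inv := fun C => Subtype.ext (Stmt5.range_mkElt_wordOf hn C.2)
      right_inv := fun W => Subtype.ext (funext fun p =>
        Stmt5.wordOf_mkChain hn W.1 W.2.1 W.2.2 p) }⟩
end
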